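/- arXiv:math/0703309 — 6 statements merged into one kernel-verified Lean document; each statement's English description precedes it below -/
import Mathlib

section
/- Let k ≥ 2 be an integer, C ∈ (0,1], and let A ⊆ G be a finite connected set of degree k with constant C, meaning every subset B ⊆ A satisfies T_k(B) ≥ C^{2k}(|B|/|A|)^{2k} T_k(A). Assume the Rudin-type bound T_k(Λ) ≤ 288^k k^k |Λ|^k holds for all dissociated sets Λ ⊆ G. Then any maximal dissociated subset Λ of A satisfies |Λ| ≤ 288 C^{-2} k |A|^2 / T_k(A)^{1/k}, and every a ∈ A can be expressed as a = ∑_i ε_i λ_i with ε_i ∈ {-1,0,1}, λ_i ∈ Λ. -/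
open Finset

variable {G : Type*} [AddCommGroup G] [DecidableEq G]

/-- `Tk k A` : number of `2k`-tuples from `A` with equal `k`-fold sums. -/
def Tk (k : ℕ) (A : Finset G) : ℕ :=
  (((Fintype.piFinset fun _ : Fin k => A) ×ˢ (Fintype.piFinset fun _ : Fin k => A)).filter
    fun t => ∑ i, t.1 i = ∑ i, t.2 i).card

/-- `Λ` is dissociated. -/
def IsDissociated (Λ : Finset G) : Prop :=
  ∀ ε : G → ℤ, (∀ x ∈ Λ, ε x = -1 ∨ ε x = 0 ∨ ε x = 1) →
    (∑ x ∈ Λ, ε x • x) = 0 → ∀ x ∈ Λ, ε x = 0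

/-- `Span Λ = { ∑ εᵢ λᵢ : εᵢ ∈ {-1,0,1} }`. -/
def SpanSet (Λ : Finset G) : Set G :=
  {y | ∃ ε : G → ℤ, (∀ x ∈ Λ, ε x = -1 ∨ ε x = 0 ∨ ε x = 1) ∧ y = ∑ x ∈ Λ, ε x • x}

lemma Tk_pos (k : ℕ) (A : Finset G) (hA : A.Nonempty) : 0 < Tk k A := by
  obtain ⟨a, ha⟩ := hA
  apply Finset.card_pos.mpr
  refine ⟨((fun _ => a), (fun _ => a)), ?_⟩
  simp [Fintype.mem_piFinset, ha]

lemma mem_span_of_mem {Λ : Finset G} {a : G} (ha : a ∈ Λ) : a ∈ SpanSet Λ := by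
  refine ⟨fun x => if x = a then 1 else 0, fun x _ => ?_, ?_⟩
  · by_cases h : x = a <;> simp [h]
  · simp only [ite_smul, one_smul, zero_smul, Finset.sum_ite_eq', ha, if_true]

theorem stmt6 (k : ℕ) (hk : 2 ≤ k) (C : ℝ) (hC0 : 0 < C) (hC1 : C ≤ 1)
    (A : Finset G) (hA : A.Nonempty)
    (hconn : ∀ B ⊆ A,
      C ^ (2 * k) * ((B.card : ℝ) / A.card) ^ (2 * k) * (Tk k A : ℝ) ≤ (Tk k B : ℝ))
    (hRudin : ∀ Λ : Finset G, IsDissociated Λ →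
      (Tk k Λ : ℝ) ≤ 288 ^ k * (k : ℝ) ^ k * (Λ.card : ℝ) ^ k)
    (Λ : Finset G) (hΛA : Λ ⊆ A) (hdiss : IsDissociated Λ)
    (hmax : ∀ Λ' : Finset G, Λ' ⊆ A → IsDissociated Λ' → Λ ⊆ Λ' → Λ' = Λ) :
    (Λ.card : ℝ) ≤ 288 * C⁻¹ ^ 2 * k * (A.card : ℝ) ^ 2 / (Tk k A : ℝ) ^ ((1 : ℝ) / k) ∧
      ∀ a ∈ A, a ∈ SpanSet Λ := by
  have hk0 : k ≠ 0 := by omega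
  have hkR : (k : ℝ) ≠ 0 := by exact_mod_cast hk0
  have hT : (0:ℝ) < (Tk k A : ℝ) := by exact_mod_cast Tk_pos k A hA
  constructor
  · -- size bound
    set L : ℝ := (Λ.card : ℝ) with hL
    set n : ℝ := (A.card : ℝ) with hn
    set T : ℝ := (Tk k A : ℝ) with hTdef
    by_cases hLz : Λ.card = 0
    · rw [hL, hLz]
      push_cast
      positivity
    have hLpos : (0:ℝ) < L := by
      rw [hL]; exact_mod_cast Nat.pos_of_ne_zero hLz
    have hnpos : (0:ℝ) < n := by
      rw [hn]; exact_mod_cast Finset.card_pos.mpr hA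
    have h1 : C ^ (2*k) * (L/n) ^ (2*k) * T ≤ 288 ^ k * (k:ℝ) ^ k * L ^ k :=
      le_trans (hconn Λ hΛA) (hRudin Λ hdiss)
    have h2 : C ^ (2*k) * L ^ (2*k) * T ≤ 288 ^ k * (k:ℝ) ^ k * L ^ k * n ^ (2*k) := by
      have := mul_le_mul_of_nonneg_right h1 (pow_nonneg hnpos.le (2*k))
      calc C ^ (2*k) * L ^ (2*k) * T
          = C ^ (2*k) * (L/n) ^ (2*k) * T * n ^ (2*k) := by
            rw [div_pow]; field_simp
        _ ≤ _ := this
    have h3 : L ^ k * T * C ^ (2*k) ≤ 288 ^ k * (k:ℝ) ^ k * n ^ (2*k) := by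
      have hLk : (0:ℝ) < L ^ k := pow_pos hLpos k
      rw [← mul_le_mul_iff_right₀ hLk]
      calc L ^ k * (L ^ k * T * C ^ (2*k)) = C ^ (2*k) * L ^ (2*k) * T := by
            rw [two_mul, pow_add]; ring
        _ ≤ 288 ^ k * (k:ℝ) ^ k * L ^ k * n ^ (2*k) := h2
        _ = L ^ k * (288 ^ k * (k:ℝ) ^ k * n ^ (2*k)) := by ring
    have key : L ^ k * T ≤ (288 * C⁻¹ ^ 2 * (k:ℝ) * n ^ 2) ^ k := by
      have hrw : (288 * C⁻¹ ^ 2 * (k:ℝ) * n ^ 2) ^ k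
          = 288 ^ k * (k:ℝ) ^ k * n ^ (2*k) / C ^ (2*k) := by
        rw [mul_pow, mul_pow, mul_pow, ← pow_mul C⁻¹ 2 k, inv_pow, ← pow_mul n 2 k,
          div_eq_mul_inv]
        ring
      rw [hrw, le_div_iff₀ (pow_pos hC0 _)]
      exact h3
    rw [le_div_iff₀ (Real.rpow_pos_of_pos hT _)]
    apply le_of_pow_le_pow_left₀ hk0 (by positivity)
    rw [mul_pow]
    have hTr : (T ^ ((1:ℝ)/k)) ^ k = T := by
      rw [← Real.rpow_natCast (T ^ ((1:ℝ)/k)) k, ← Real.rpow_mul hT.le,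
        one_div, inv_mul_cancel₀ hkR, Real.rpow_one]
    rw [hTr]
    exact key
  · -- span
    intro a haA
    by_contra hspan
    have haΛ : a ∉ Λ := fun h => hspan (mem_span_of_mem h)
    have hins : IsDissociated (insert a Λ) := by
      intro ε hε hsum x hx
      rw [Finset.sum_insert haΛ] at hsum
      have hεΛ : ∀ y ∈ Λ, ε y = -1 ∨ ε y = 0 ∨ ε y = 1 :=
        fun y hy => hε y (mem_insert_of_mem hy)
      have hεa0 : ε a = 0 := by
        rcases hε a (mem_insert_self a Λ) with h | h | h
        · exfalso
          apply hspan
          refine ⟨ε, hεΛ, ?_⟩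
          rw [h] at hsum
          have : -a + ∑ y ∈ Λ, ε y • y = 0 := by simpa using hsum
          linear_combination (norm := abel) -this
        · exact h
        · exfalso
          apply hspan
          refine ⟨fun y => -ε y, fun y hy => by rcases hεΛ y hy with h' | h' | h' <;>
            simp [h'], ?_⟩
          rw [h] at hsum
          have h2 : a + ∑ y ∈ Λ, ε y • y = 0 := by simpa using hsum
          have : ∑ y ∈ Λ, (-ε y) • y = -∑ y ∈ Λ, ε y • y := by
            rw [← Finset.sum_neg_distrib]
            exact Finset.sum_congr rfl fun y _ => by rw [neg_smul]
          rw [this]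
          linear_combination (norm := abel) h2
      have hΛ0 : ∀ y ∈ Λ, ε y = 0 := by
        apply hdiss ε hεΛ
        rw [hεa0, zero_smul, zero_add] at hsum
        exact hsum
      rcases Finset.mem_insert.mp hx with rfl | hx'
      · exact hεa0
      · exact hΛ0 x hx'
    have heq := hmax (insert a Λ) (Finset.insert_subset haA hΛA) hins
      (Finset.subset_insert a Λ)
    exact haΛ (heq ▸ Finset.mem_insert_self a Λ)
end

section
/- Let k = 2^p with p ≥ 1, let A ⊆ G be finite with |A| ≥ 3, and suppose A is strongly connected of degree k with constant C ∈ (0,1]: for all disjoint E, F with E ⊔ F = A, ∑_x (E∘F)(x)·((A*_{k-2}A)∘(A*_{k-2}A))(x) ≥ C (|E|/|A|)(|F|/|A|) T_k(A). Then A is connected of degree k with constant C/8: for every B ⊆ A, T_k(B) ≥ (C/8)^{2k}(|B|/|A|)^{2k} T_k(A). -/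
open Finset Pointwise
set_option linter.unusedSectionVars false
set_option maxHeartbeats 1000000

variable {G : Type*} [AddCommGroup G] [DecidableEq G]

/-- `(E ∘ F)(x)` : number of pairs `(a,b) ∈ E × F` with `a - b = x`. -/
def circ2 (E F : Finset G) (x : G) : ℕ :=
  ((E ×ˢ F).filter fun p => p.1 - p.2 = x).card

/-- `((A *_{k-2} A) ∘ (A *_{k-2} A))(x)` : number of pairs of `(k-1)`-tuples from `A`
whose sums differ by `x`. -/
def circConv (k : ℕ) (A : Finset G) (x : G) : ℕ :=
  (((Fintype.piFinset fun _ : Fin (k - 1) => A) ×ˢ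
      (Fintype.piFinset fun _ : Fin (k - 1) => A)).filter
    fun t => (∑ i, t.1 i) - (∑ i, t.2 i) = x).card

/-- `e(E,F) = ∑_x (E ∘ F)(x) ⬝ ((A *_{k-2} A) ∘ (A *_{k-2} A))(x)`. -/
def eWeight (k : ℕ) (A E F : Finset G) : ℕ :=
  ∑ x ∈ E - F, circ2 E F x * circConv k A x

namespace St10


noncomputable def ind (X : Finset G) : AddMonoidAlgebra ℝ G :=
  ∑ a ∈ X, AddMonoidAlgebra.single a 1

noncomputable def refl : AddMonoidAlgebra ℝ G →+* AddMonoidAlgebra ℝ G :=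
  AddMonoidAlgebra.mapDomainRingHom ℝ (negAddMonoidHom : G →+ G)

lemma refl_apply (f : AddMonoidAlgebra ℝ G) (y : G) : (refl f).coeff y = f.coeff (-y) := by
  have h : (refl f).coeff y = Finsupp.mapDomain (fun x : G => -x) f.coeff y := rfl
  rw [h]
  have := Finsupp.mapDomain_apply (f := fun x : G => -x) neg_injective f.coeff (-y)
  simpa using this

lemma refl_refl (f : AddMonoidAlgebra ℝ G) : refl (refl f) = f := by
  ext y; rw [refl_apply, refl_apply, neg_neg]

noncomputable def Ip (f g : AddMonoidAlgebra ℝ G) : ℝ := (f * refl g).coeff 0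

noncomputable def Np (f : AddMonoidAlgebra ℝ G) : ℝ := Ip f f

lemma Ip_eq_sum (f g : AddMonoidAlgebra ℝ G) (S : Finset G) (hS : f.coeff.support ⊆ S) :
    Ip f g = ∑ y ∈ S, f.coeff y * g.coeff y := by
  classical
  rw [Ip, AddMonoidAlgebra.coeff_mul]
  have h1 : ∀ a : G, ((refl g).coeff.sum fun a₂ b₂ => if a + a₂ = 0 then f.coeff a * b₂ else 0)
      = f.coeff a * g.coeff a := by
    intro a
    rw [Finsupp.sum]
    rw [Finset.sum_eq_single (-a)]
    · rw [refl_apply, neg_neg]; simp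
    · intro b _ hb
      rw [if_neg]
      intro h; exact hb (eq_neg_of_add_eq_zero_right h)
    · intro h
      rw [Finsupp.notMem_support_iff] at h
      simp [refl_apply, neg_neg, h]
  rw [Finsupp.sum]
  rw [Finset.sum_congr rfl fun a _ => h1 a]
  refine Finset.sum_subset hS ?_
  intro y _ hy
  rw [Finsupp.notMem_support_iff] at hy
  rw [hy, zero_mul]


lemma Np_eq_sum (f : AddMonoidAlgebra ℝ G) (S : Finset G) (hS : f.coeff.support ⊆ S) :
    Np f = ∑ y ∈ S, f.coeff y ^ 2 := by
  rw [Np, Ip_eq_sum f f S hS]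
  exact Finset.sum_congr rfl fun y _ => (sq (f.coeff y)).symm

lemma Np_nonneg (f : AddMonoidAlgebra ℝ G) : 0 ≤ Np f := by
  rw [Np_eq_sum f f.coeff.support (subset_refl _)]
  exact Finset.sum_nonneg fun y _ => sq_nonneg _

lemma cs (f g : AddMonoidAlgebra ℝ G) : Ip f g ^ 2 ≤ Np f * Np g := by
  classical
  set S := f.coeff.support ∪ g.coeff.support with hs
  rw [Ip_eq_sum f g S Finset.subset_union_left,
    Np_eq_sum f S Finset.subset_union_left, Np_eq_sum g S Finset.subset_union_right]
  exact Finset.sum_mul_sq_le_sq_mul_sq S (fun y => f.coeff y) (fun y => g.coeff y)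

lemma Np_mul_eq (f g : AddMonoidAlgebra ℝ G) :
    Np (f * g) = Ip (f * refl f) (g * refl g) := by
  rw [Np, Ip, Ip, map_mul, map_mul, refl_refl]
  have : f * g * (refl f * refl g) = f * refl f * (refl g * g) := by ring
  rw [this]

lemma Np_refl_eq (f : AddMonoidAlgebra ℝ G) : Np (f * refl f) = Np (f * f) := by
  rw [Np, Np, Ip, Ip, map_mul, map_mul, refl_refl]
  have : f * refl f * (refl f * f) = f * f * (refl f * refl f) := by ring
  rw [this]

lemma key_sq (f g : AddMonoidAlgebra ℝ G) :
    Np (f * g) ^ 2 ≤ Np (f * f) * Np (g * g) := by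
  rw [Np_mul_eq]
  calc Ip (f * refl f) (g * refl g) ^ 2 ≤ Np (f * refl f) * Np (g * refl g) := cs _ _
    _ = Np (f * f) * Np (g * g) := by rw [Np_refl_eq, Np_refl_eq]

lemma key_pow : ∀ (p : ℕ) (f g : AddMonoidAlgebra ℝ G),
    Np (f * g ^ (2 ^ p - 1)) ^ (2 ^ p) ≤ Np (f ^ (2 ^ p)) * Np (g ^ (2 ^ p)) ^ (2 ^ p - 1) := by
  intro p
  induction p with
  | zero => intro f g; simp
  | succ p ih =>
    intro f g
    set K := 2 ^ p with hK
    have hK1 : 1 ≤ K := Nat.one_le_two_pow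
    have e2 : 2 ^ (p + 1) = 2 * K := by rw [hK, pow_succ]; ring
    have e1 : f * g ^ (2 ^ (p + 1) - 1) = f * g ^ (K - 1) * g ^ K := by
      have : 2 ^ (p + 1) - 1 = (K - 1) + K := by omega
      rw [this, pow_add]; ring
    have step1 : Np (f * g ^ (2 ^ (p + 1) - 1)) ^ 2
        ≤ Np (f * f * (g * g) ^ (K - 1)) * Np ((g * g) ^ K) := by
      have h5 := key_sq (f * g ^ (K - 1)) (g ^ K)
      rw [← e1] at h5
      have r1 : f * g ^ (K - 1) * (f * g ^ (K - 1)) = f * f * (g * g) ^ (K - 1) := by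
        rw [mul_pow]; ring
      have r2 : g ^ K * g ^ K = (g * g) ^ K := by rw [mul_pow]
      rw [r1, r2] at h5
      exact h5
    have ihh := ih (f * f) (g * g)
    have rf : (f * f) ^ K = f ^ (2 * K) := by rw [← sq, ← pow_mul]
    have rg : (g * g) ^ K = g ^ (2 * K) := by rw [← sq, ← pow_mul]
    rw [rf, rg] at ihh
    calc Np (f * g ^ (2 ^ (p + 1) - 1)) ^ 2 ^ (p + 1)
        = (Np (f * g ^ (2 ^ (p + 1) - 1)) ^ 2) ^ K := by rw [e2, pow_mul]
      _ ≤ (Np (f * f * (g * g) ^ (K - 1)) * Np ((g * g) ^ K)) ^ K := by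
          exact pow_le_pow_left₀ (sq_nonneg _) step1 K
      _ = Np (f * f * (g * g) ^ (K - 1)) ^ K * Np (g ^ (2 * K)) ^ K := by
          rw [mul_pow, rg]
      _ ≤ Np (f ^ (2 * K)) * Np (g ^ (2 * K)) ^ (K - 1) * Np (g ^ (2 * K)) ^ K := by
          refine mul_le_mul_of_nonneg_right ihh (pow_nonneg (Np_nonneg _) _)
      _ = Np (f ^ (2 ^ (p + 1))) * Np (g ^ (2 ^ (p + 1))) ^ (2 ^ (p + 1) - 1) := by
          rw [mul_assoc, ← pow_add, e2]
          congr 2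
          omega



def cnt (n : ℕ) (X : Finset G) (y : G) : ℕ :=
  ((Fintype.piFinset fun _ : Fin n => X).filter fun t => ∑ i, t i = y).card

lemma cnt_zero (X : Finset G) (y : G) : cnt 0 X y = if (0 : G) = y then 1 else 0 := by
  classical
  rw [cnt]
  have h : (Fintype.piFinset fun _ : Fin 0 => X) = {fun i => i.elim0} := by
    ext t
    simp only [Fintype.mem_piFinset, Finset.mem_singleton]
    constructor
    · intro _; exact Subsingleton.elim _ _
    · intro _ i; exact i.elim0
  rw [h, Finset.filter_singleton]
  by_cases hy : (0 : G) = y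
  · rw [if_pos, if_pos hy]
    · simp
    · simpa using hy
  · rw [if_neg, if_neg hy]
    · simp
    · simpa using hy

lemma cnt_succ (n : ℕ) (X : Finset G) (y : G) :
    cnt (n + 1) X y = ∑ a ∈ X, cnt n X (y - a) := by
  classical
  rw [cnt]
  rw [Finset.card_eq_sum_card_fiberwise (f := fun t => t (Fin.last n)) (t := X)
    (fun t ht => by
      rw [Finset.mem_coe, Finset.mem_filter] at ht
      exact Fintype.mem_piFinset.mp ht.1 _)]
  refine Finset.sum_congr rfl fun a ha => ?_
  rw [cnt]
  refine Finset.card_bij' (fun t _ => Fin.init t) (fun s _ => Fin.snoc s a) ?_ ?_ ?_ ?_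
  · intro t ht
    simp only [Finset.mem_filter, Fintype.mem_piFinset] at ht ⊢
    obtain ⟨⟨h1, h2⟩, h3⟩ := ht
    refine ⟨fun i => h1 _, ?_⟩
    have hsum : ∑ i : Fin (n + 1), t i = (∑ i : Fin n, Fin.init t i) + t (Fin.last n) := by
      rw [Fin.sum_univ_castSucc]
      rfl
    rw [h2, h3] at hsum
    rw [eq_sub_iff_add_eq, ← h3]
    rw [h3, ← hsum]
  · intro s hs
    simp only [Finset.mem_filter, Fintype.mem_piFinset] at hs ⊢
    obtain ⟨h1, h2⟩ := hs
    refine ⟨⟨fun i => ?_, ?_⟩, by simp⟩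
    · refine Fin.lastCases ?_ ?_ i
      · rw [Fin.snoc_last]; exact ha
      · intro j; rw [Fin.snoc_castSucc]; exact h1 j
    · rw [Fin.sum_univ_castSucc, Fin.snoc_last]
      simp only [Fin.snoc_castSucc]
      rw [h2, sub_add_cancel]
  · intro t ht
    simp only [Finset.mem_filter] at ht
    show Fin.snoc (Fin.init t) a = t
    rw [← ht.2]
    exact Fin.snoc_init_self t
  · intro s _
    exact funext fun i => by simp [Fin.init]



lemma mul_ind_apply (f : AddMonoidAlgebra ℝ G) (X : Finset G) (y : G) :
    (f * ind X).coeff y = ∑ a ∈ X, f.coeff (y - a) := by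
  rw [ind, Finset.mul_sum, AddMonoidAlgebra.coeff_sum, Finset.sum_apply']
  exact Finset.sum_congr rfl fun a _ => by rw [AddMonoidAlgebra.coeff_mul_single_apply, mul_one, sub_eq_add_neg]

lemma pow_ind_apply (X : Finset G) : ∀ (n : ℕ) (y : G), ((ind X) ^ n).coeff y = (cnt n X y : ℝ) := by
  intro n
  induction n with
  | zero =>
    intro y
    rw [pow_zero, cnt_zero, AddMonoidAlgebra.one_def, AddMonoidAlgebra.coeff_single_apply]
    split <;> simp
  | succ n ih =>
    intro y
    rw [pow_succ, mul_ind_apply, cnt_succ]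
    push_cast
    exact Finset.sum_congr rfl fun a _ => ih (y - a)

def mcnt (n : ℕ) (E X : Finset G) (y : G) : ℕ :=
  ((E ×ˢ Fintype.piFinset fun _ : Fin n => X).filter fun q => q.1 + ∑ i, q.2 i = y).card

lemma mcnt_eq_sum (n : ℕ) (E X : Finset G) (y : G) :
    mcnt n E X y = ∑ a ∈ E, cnt n X (y - a) := by
  classical
  rw [mcnt]
  rw [Finset.card_eq_sum_card_fiberwise (f := fun q => q.1) (t := E)
    (fun q hq => by
      rw [Finset.mem_coe, Finset.mem_filter, Finset.mem_product] at hq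
      exact hq.1.1)]
  refine Finset.sum_congr rfl fun a ha => ?_
  rw [cnt]
  refine Finset.card_bij' (fun q _ => q.2) (fun t _ => (a, t)) ?_ ?_ ?_ ?_
  · intro q hq
    rw [Finset.mem_filter] at hq
    obtain ⟨hq', hq4⟩ := hq
    rw [Finset.mem_filter, Finset.mem_product] at hq'
    obtain ⟨⟨hq1, hq2⟩, hq3⟩ := hq'
    refine Finset.mem_filter.mpr ⟨hq2, ?_⟩
    show ∑ i, q.2 i = y - a
    rw [eq_sub_iff_add_eq, add_comm, ← hq4]
    exact hq3
  · intro t ht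
    rw [Finset.mem_filter] at ht
    refine Finset.mem_filter.mpr ⟨Finset.mem_filter.mpr ⟨Finset.mem_product.mpr ⟨ha, ht.1⟩, ?_⟩, rfl⟩
    show a + ∑ i, t i = y
    rw [add_comm]
    exact eq_sub_iff_add_eq.mp ht.2
  · intro q hq
    rw [Finset.mem_filter] at hq
    exact Prod.ext_iff.mpr ⟨hq.2.symm, rfl⟩
  · intro t _
    rfl

lemma mixed_apply (n : ℕ) (E X : Finset G) (y : G) :
    (ind E * (ind X) ^ n).coeff y = (mcnt n E X y : ℝ) := by
  rw [mul_comm, mul_ind_apply, mcnt_eq_sum]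
  push_cast
  exact Finset.sum_congr rfl fun a _ => pow_ind_apply X n (y - a)

lemma support_pow_sub (X : Finset G) (n : ℕ) :
    ((ind X) ^ n : AddMonoidAlgebra ℝ G).coeff.support ⊆
      (Fintype.piFinset fun _ : Fin n => X).image fun t => ∑ i, t i := by
  intro y hy
  rw [Finsupp.mem_support_iff, pow_ind_apply] at hy
  have h0 : cnt n X y ≠ 0 := by exact_mod_cast hy
  rw [cnt] at h0
  obtain ⟨t, ht⟩ := Finset.card_pos.mp (Nat.pos_of_ne_zero h0)
  rw [Finset.mem_filter] at ht
  exact Finset.mem_image.mpr ⟨t, ht.1, ht.2⟩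

lemma support_mixed_sub (n : ℕ) (E X : Finset G) :
    (ind E * (ind X) ^ n : AddMonoidAlgebra ℝ G).coeff.support ⊆
      (E ×ˢ Fintype.piFinset fun _ : Fin n => X).image fun q => q.1 + ∑ i, q.2 i := by
  intro y hy
  rw [Finsupp.mem_support_iff, mixed_apply] at hy
  have h0 : mcnt n E X y ≠ 0 := by exact_mod_cast hy
  rw [mcnt] at h0
  obtain ⟨q, hq⟩ := Finset.card_pos.mp (Nat.pos_of_ne_zero h0)
  rw [Finset.mem_filter] at hq
  exact Finset.mem_image.mpr ⟨q, hq.1, hq.2⟩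

lemma Tk_bridge (n : ℕ) (X : Finset G) : (Tk n X : ℝ) = Np ((ind X) ^ n) := by
  classical
  rw [Np_eq_sum _ _ (support_pow_sub X n)]
  have hcast : ∀ y ∈ (Fintype.piFinset fun _ : Fin n => X).image fun t => ∑ i, t i,
      ((ind X) ^ n : AddMonoidAlgebra ℝ G).coeff y ^ 2 = ((cnt n X y * cnt n X y : ℕ) : ℝ) := by
    intro y _
    rw [pow_ind_apply]
    push_cast
    ring
  rw [Finset.sum_congr rfl hcast, ← Nat.cast_sum]
  congr 1
  rw [Tk]
  rw [Finset.card_eq_sum_card_fiberwise (f := fun t => ∑ i, t.1 i)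
    (t := (Fintype.piFinset fun _ : Fin n => X).image fun t => ∑ i, t i)
    (fun t ht => by
      rw [Finset.mem_coe, Finset.mem_filter, Finset.mem_product] at ht
      exact Finset.mem_image.mpr ⟨t.1, ht.1.1, rfl⟩)]
  refine Finset.sum_congr rfl fun y hy => ?_
  have hfe : (((Fintype.piFinset fun _ : Fin n => X) ×ˢ (Fintype.piFinset fun _ : Fin n => X)).filter
        fun t => ∑ i, t.1 i = ∑ i, t.2 i).filter (fun t => ∑ i, t.1 i = y)
      = ((Fintype.piFinset fun _ : Fin n => X).filter fun t => ∑ i, t i = y) ×ˢ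
        ((Fintype.piFinset fun _ : Fin n => X).filter fun t => ∑ i, t i = y) := by
    rw [Finset.filter_filter, ← Finset.filter_product]
    refine Finset.filter_congr fun t _ => ?_
    constructor
    · rintro ⟨h1, h2⟩
      exact ⟨h2, h1 ▸ h2⟩
    · rintro ⟨h1, h2⟩
      exact ⟨h1.trans h2.symm, h1⟩
  rw [hfe, Finset.card_product]
  rfl

lemma eWeight_card (k : ℕ) (A E F : Finset G) :
    eWeight k A E F =
      (((E ×ˢ F) ×ˢ ((Fintype.piFinset fun _ : Fin (k - 1) => A) ×ˢ
          (Fintype.piFinset fun _ : Fin (k - 1) => A))).filter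
        fun z => z.1.1 - z.1.2 = (∑ i, z.2.1 i) - ∑ i, z.2.2 i).card := by
  classical
  rw [eWeight]
  rw [Finset.card_eq_sum_card_fiberwise (f := fun z => z.1.1 - z.1.2) (t := E - F)
    (fun z hz => by
      rw [Finset.mem_coe, Finset.mem_filter, Finset.mem_product] at hz
      have h1 := Finset.mem_product.mp hz.1.1
      exact Finset.sub_mem_sub h1.1 h1.2)]
  refine Finset.sum_congr rfl fun x hx => ?_
  have hfe : ((((E ×ˢ F) ×ˢ ((Fintype.piFinset fun _ : Fin (k - 1) => A) ×ˢ
          (Fintype.piFinset fun _ : Fin (k - 1) => A))).filter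
        fun z => z.1.1 - z.1.2 = (∑ i, z.2.1 i) - ∑ i, z.2.2 i).filter
        fun z => z.1.1 - z.1.2 = x)
      = ((E ×ˢ F).filter fun p => p.1 - p.2 = x) ×ˢ
        (((Fintype.piFinset fun _ : Fin (k - 1) => A) ×ˢ
          (Fintype.piFinset fun _ : Fin (k - 1) => A)).filter
          fun t => (∑ i, t.1 i) - (∑ i, t.2 i) = x) := by
    rw [Finset.filter_filter, ← Finset.filter_product]
    refine Finset.filter_congr fun z _ => ?_
    constructor
    · rintro ⟨h1, h2⟩
      exact ⟨h2, h1 ▸ h2⟩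
    · rintro ⟨h1, h2⟩
      exact ⟨h1.trans h2.symm, h1⟩
  rw [hfe, Finset.card_product]
  rfl

lemma eWeight_card' (k : ℕ) (A E F : Finset G) :
    eWeight k A E F = ∑ y ∈ (E ×ˢ Fintype.piFinset fun _ : Fin (k - 1) => A).image
        (fun q => q.1 + ∑ i, q.2 i),
      mcnt (k - 1) E A y * mcnt (k - 1) F A y := by
  classical
  rw [eWeight_card]
  rw [Finset.card_bij' (i := fun (z : (G × G) × ((Fin (k-1) → G) × (Fin (k-1) → G))) _ =>
      ((z.1.1, z.2.2), (z.1.2, z.2.1)))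
    (j := fun (w : (G × (Fin (k-1) → G)) × (G × (Fin (k-1) → G))) _ =>
      ((w.1.1, w.2.1), (w.2.2, w.1.2)))
    (t := (((E ×ˢ Fintype.piFinset fun _ : Fin (k - 1) => A) ×ˢ
        (F ×ˢ Fintype.piFinset fun _ : Fin (k - 1) => A)).filter
      fun w => w.1.1 + ∑ i, w.1.2 i = w.2.1 + ∑ i, w.2.2 i))
    ?_ ?_ ?_ ?_]
  · rw [Finset.card_eq_sum_card_fiberwise (f := fun w => w.1.1 + ∑ i, w.1.2 i)
      (t := (E ×ˢ Fintype.piFinset fun _ : Fin (k - 1) => A).image (fun q => q.1 + ∑ i, q.2 i))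
      (fun w hw => by
        rw [Finset.mem_coe, Finset.mem_filter, Finset.mem_product] at hw
        exact Finset.mem_image.mpr ⟨w.1, hw.1.1, rfl⟩)]
    refine Finset.sum_congr rfl fun y hy => ?_
    have hfe : ((((E ×ˢ Fintype.piFinset fun _ : Fin (k - 1) => A) ×ˢ
          (F ×ˢ Fintype.piFinset fun _ : Fin (k - 1) => A)).filter
        fun w => w.1.1 + ∑ i, w.1.2 i = w.2.1 + ∑ i, w.2.2 i).filter
        fun w => w.1.1 + ∑ i, w.1.2 i = y)
        = ((E ×ˢ Fintype.piFinset fun _ : Fin (k - 1) => A).filter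
            fun q => q.1 + ∑ i, q.2 i = y) ×ˢ
          ((F ×ˢ Fintype.piFinset fun _ : Fin (k - 1) => A).filter
            fun q => q.1 + ∑ i, q.2 i = y) := by
      rw [Finset.filter_filter, ← Finset.filter_product]
      refine Finset.filter_congr fun w _ => ?_
      constructor
      · rintro ⟨h1, h2⟩
        exact ⟨h2, h1 ▸ h2⟩
      · rintro ⟨h1, h2⟩
        exact ⟨h1.trans h2.symm, h1⟩
    rw [hfe, Finset.card_product]
    rfl
  · intro z hz
    rw [Finset.mem_filter, Finset.mem_product] at hz
    obtain ⟨⟨hz1, hz2⟩, hz3⟩ := hz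
    rw [Finset.mem_product] at hz1 hz2
    refine Finset.mem_filter.mpr ⟨?_, ?_⟩
    · rw [Finset.mem_product]
      constructor
      · rw [Finset.mem_product]; exact ⟨hz1.1, hz2.2⟩
      · rw [Finset.mem_product]; exact ⟨hz1.2, hz2.1⟩
    · show z.1.1 + ∑ i, z.2.2 i = z.1.2 + ∑ i, z.2.1 i
      rw [sub_eq_sub_iff_add_eq_add] at hz3
      rw [hz3]
      exact add_comm _ _
  · intro w hw
    rw [Finset.mem_filter, Finset.mem_product] at hw
    obtain ⟨⟨hw1, hw2⟩, hw3⟩ := hw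
    rw [Finset.mem_product] at hw1 hw2
    refine Finset.mem_filter.mpr ⟨?_, ?_⟩
    · rw [Finset.mem_product]
      constructor
      · rw [Finset.mem_product]; exact ⟨hw1.1, hw2.1⟩
      · rw [Finset.mem_product]; exact ⟨hw2.2, hw1.2⟩
    · show w.1.1 - w.2.1 = (∑ i, w.2.2 i) - ∑ i, w.1.2 i
      rw [sub_eq_sub_iff_add_eq_add]
      rw [hw3]
      exact add_comm _ _
  · intro z _
    rfl
  · intro w _
    rfl

lemma eWeight_bridge (k : ℕ) (A E F : Finset G) :
    (eWeight k A E F : ℝ) =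
      Ip (ind E * (ind A) ^ (k - 1)) (ind F * (ind A) ^ (k - 1)) := by
  classical
  rw [Ip_eq_sum _ _ _ (support_mixed_sub (k - 1) E A), eWeight_card']
  push_cast
  refine Finset.sum_congr rfl fun y _ => ?_
  rw [mixed_apply, mixed_apply]

lemma Np_le_of_le (f g : AddMonoidAlgebra ℝ G) (h0 : ∀ y, 0 ≤ f.coeff y) (h : ∀ y, f.coeff y ≤ g.coeff y) :
    Np f ≤ Np g := by
  classical
  rw [Np_eq_sum f (f.coeff.support ∪ g.coeff.support) Finset.subset_union_left,
      Np_eq_sum g (f.coeff.support ∪ g.coeff.support) Finset.subset_union_right]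
  exact Finset.sum_le_sum fun y _ => pow_le_pow_left₀ (h0 y) (h y) 2

lemma mcnt_mono (n : ℕ) {E E' : Finset G} (h : E ⊆ E') (X : Finset G) (y : G) :
    mcnt n E X y ≤ mcnt n E' X y := by
  rw [mcnt, mcnt]
  refine Finset.card_le_card (Finset.filter_subset_filter _ ?_)
  exact Finset.product_subset_product h (Finset.Subset.refl _)

lemma NuF_le (n : ℕ) {F A : Finset G} (h : F ⊆ A) :
    Np (ind F * (ind A) ^ n) ≤ Np ((ind A) ^ (n + 1)) := by
  have e : ((ind A : AddMonoidAlgebra ℝ G)) ^ (n + 1) = ind A * (ind A) ^ n := by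
    rw [pow_succ']
  rw [e]
  refine Np_le_of_le _ _ (fun y => ?_) (fun y => ?_)
  · rw [mixed_apply]
    positivity
  · rw [mixed_apply, mixed_apply]
    exact_mod_cast mcnt_mono n h A y

lemma Tk_pos {A : Finset G} (hA : A.Nonempty) (n : ℕ) : 0 < Tk n A := by
  obtain ⟨a, ha⟩ := hA
  rw [Tk]
  refine Finset.card_pos.mpr ⟨(fun _ => a, fun _ => a), ?_⟩
  rw [Finset.mem_filter, Finset.mem_product]
  exact ⟨⟨Fintype.mem_piFinset.mpr fun _ => ha, Fintype.mem_piFinset.mpr fun _ => ha⟩, rfl⟩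

lemma Tk_mono {B B' : Finset G} (h : B' ⊆ B) (n : ℕ) : Tk n B' ≤ Tk n B := by
  rw [Tk, Tk]
  refine Finset.card_le_card (Finset.filter_subset_filter _ ?_)
  exact Finset.product_subset_product
    (Fintype.piFinset_subset _ _ fun _ => h) (Fintype.piFinset_subset _ _ fun _ => h)

lemma main_lemma (p : ℕ) (A : Finset G) (hAne : A.Nonempty) (C : ℝ) (hC0 : 0 < C)
    (hconn : ∀ E F : Finset G, Disjoint E F → E ∪ F = A →
      C * ((E.card : ℝ) / A.card) * ((F.card : ℝ) / A.card) * (Tk (2 ^ p) A : ℝ) ≤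
        (eWeight (2 ^ p) A E F : ℝ))
    (B : Finset G) (hB : B ⊆ A) :
    (C * ((B.card : ℝ) / A.card) * (((A.card : ℝ) - B.card) / A.card)) ^ (2 * 2 ^ p)
      * (Tk (2 ^ p) A : ℝ) ≤ (Tk (2 ^ p) B : ℝ) := by
  classical
  have hk1 : 1 ≤ 2 ^ p := Nat.one_le_two_pow
  have hA0 : (0 : ℝ) < A.card := by
    have := Finset.card_pos.mpr hAne
    exact_mod_cast this
  have hBA : (B.card : ℝ) ≤ A.card := by exact_mod_cast Finset.card_le_card hB
  have hB0 : (0 : ℝ) ≤ B.card := by positivity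
  set F : Finset G := A \ B with hF
  have hcardF : ((F.card : ℝ)) = (A.card : ℝ) - B.card := by
    rw [hF, Finset.card_sdiff_of_subset hB, Nat.cast_sub (Finset.card_le_card hB)]
  have h1 := hconn B F Finset.disjoint_sdiff (Finset.union_sdiff_of_subset hB)
  rw [eWeight_bridge, hcardF] at h1
  set uB := ind B * (ind A : AddMonoidAlgebra ℝ G) ^ (2 ^ p - 1) with huB
  set uF := ind F * (ind A : AddMonoidAlgebra ℝ G) ^ (2 ^ p - 1) with huF
  set T : ℝ := (Tk (2 ^ p) A : ℝ) with hT
  have hT0 : 0 < T := by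
    rw [hT]
    exact_mod_cast Tk_pos hAne (2 ^ p)
  set x : ℝ := C * ((B.card : ℝ) / A.card) * (((A.card : ℝ) - B.card) / A.card) with hx
  have hx0 : 0 ≤ x := by
    rw [hx]
    refine mul_nonneg (mul_nonneg hC0.le (div_nonneg hB0 hA0.le)) (div_nonneg ?_ hA0.le)
    linarith
  have h4 : x * T ≤ Ip uB uF := h1
  have h3 : Np uF ≤ T := by
    have h := NuF_le (2 ^ p - 1) (show F ⊆ A from Finset.sdiff_subset)
    rw [Nat.sub_add_cancel hk1] at h
    rw [hT, Tk_bridge]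
    exact h
  have h5 : (x * T) ^ 2 ≤ Np uB * T :=
    calc (x * T) ^ 2 ≤ Ip uB uF ^ 2 := pow_le_pow_left₀ (mul_nonneg hx0 hT0.le) h4 2
      _ ≤ Np uB * Np uF := cs uB uF
      _ ≤ Np uB * T := mul_le_mul_of_nonneg_left h3 (Np_nonneg uB)
  have h6 : x ^ 2 * T ≤ Np uB := by
    refine le_of_mul_le_mul_right ?_ hT0
    calc x ^ 2 * T * T = (x * T) ^ 2 := by ring
      _ ≤ Np uB * T := h5
  have h7 : (Np uB) ^ (2 ^ p) ≤ (Tk (2 ^ p) B : ℝ) * T ^ (2 ^ p - 1) := by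
    have h := key_pow p (ind B) (ind A)
    rw [← Tk_bridge, ← Tk_bridge] at h
    rw [hT]
    exact h
  have h8 : (x ^ 2 * T) ^ (2 ^ p) ≤ (Tk (2 ^ p) B : ℝ) * T ^ (2 ^ p - 1) := by
    refine le_trans (pow_le_pow_left₀ ?_ h6 (2 ^ p)) h7
    positivity
  have hTk : T ^ (2 ^ p) = T * T ^ (2 ^ p - 1) := by
    conv_lhs => rw [← Nat.sub_add_cancel hk1]
    rw [pow_succ']
  have h9 : x ^ (2 * 2 ^ p) * T * T ^ (2 ^ p - 1) ≤ (Tk (2 ^ p) B : ℝ) * T ^ (2 ^ p - 1) := by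
    calc x ^ (2 * 2 ^ p) * T * T ^ (2 ^ p - 1) = (x ^ 2 * T) ^ (2 ^ p) := by
          conv_rhs => rw [mul_pow, ← pow_mul, hTk]
          ring
      _ ≤ (Tk (2 ^ p) B : ℝ) * T ^ (2 ^ p - 1) := h8
  have hTp : (0 : ℝ) < T ^ (2 ^ p - 1) := by positivity
  exact le_of_mul_le_mul_right h9 hTp

end St10

theorem stmt10 (p : ℕ) (hp : 1 ≤ p) (A : Finset G) (hA : 3 ≤ A.card)
    (C : ℝ) (hC0 : 0 < C) (hC1 : C ≤ 1)
    (hconn : ∀ E F : Finset G, Disjoint E F → E ∪ F = A →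
      C * ((E.card : ℝ) / A.card) * ((F.card : ℝ) / A.card) * (Tk (2 ^ p) A : ℝ) ≤
        (eWeight (2 ^ p) A E F : ℝ)) :
    ∀ B ⊆ A,
      (C / 8) ^ (2 * 2 ^ p) * ((B.card : ℝ) / A.card) ^ (2 * 2 ^ p) * (Tk (2 ^ p) A : ℝ) ≤
        (Tk (2 ^ p) B : ℝ) := by
  intro B hB
  classical
  have hAne : A.Nonempty := Finset.card_pos.mp (by omega)
  have hA0 : (0 : ℝ) < A.card := by exact_mod_cast Finset.card_pos.mpr hAne
  have hT0 : (0 : ℝ) ≤ (Tk (2 ^ p) A : ℝ) := by positivity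
  have hBA : B.card ≤ A.card := Finset.card_le_card hB
  have hBAr : (B.card : ℝ) ≤ A.card := by exact_mod_cast hBA
  have hB0 : (0 : ℝ) ≤ B.card := by positivity
  by_cases hc : 2 * B.card ≤ A.card
  · have hm := St10.main_lemma p A hAne C hC0 hconn B hB
    refine le_trans ?_ hm
    refine mul_le_mul_of_nonneg_right ?_ hT0
    rw [← mul_pow]
    refine pow_le_pow_left₀ (by positivity) ?_ _
    have hcr : 2 * (B.card : ℝ) ≤ A.card := by exact_mod_cast hc
    have h2 : (1 : ℝ) / 8 ≤ ((A.card : ℝ) - B.card) / A.card := by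
      rw [le_div_iff₀ hA0]
      linarith
    calc C / 8 * ((B.card : ℝ) / A.card)
        = C * ((B.card : ℝ) / A.card) * (1 / 8) := by ring
      _ ≤ C * ((B.card : ℝ) / A.card) * (((A.card : ℝ) - B.card) / A.card) := by
          refine mul_le_mul_of_nonneg_left h2 (by positivity)
  · have hc' : A.card < 2 * B.card := lt_of_not_ge hc
    have hm_le : (A.card + 1) / 2 ≤ B.card := by omega
    obtain ⟨B', hB'B, hB'card⟩ := Finset.exists_subset_card_eq hm_le
    have hm := St10.main_lemma p A hAne C hC0 hconn B' (hB'B.trans hB)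
    have hmono : (Tk (2 ^ p) B' : ℝ) ≤ (Tk (2 ^ p) B : ℝ) := by
      exact_mod_cast St10.Tk_mono hB'B (2 ^ p)
    refine le_trans ?_ (le_trans hm hmono)
    refine mul_le_mul_of_nonneg_right ?_ hT0
    rw [← mul_pow]
    refine pow_le_pow_left₀ (by positivity) ?_ _
    rw [hB'card]
    have h2m : A.card ≤ 2 * ((A.card + 1) / 2) := by omega
    have h3m : 3 * ((A.card + 1) / 2) ≤ 2 * A.card := by omega
    have h2mr : (A.card : ℝ) ≤ 2 * (((A.card + 1) / 2 : ℕ) : ℝ) := by exact_mod_cast h2m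
    have h3mr : 3 * (((A.card + 1) / 2 : ℕ) : ℝ) ≤ 2 * A.card := by exact_mod_cast h3m
    have hmr1 : (1 : ℝ) / 2 ≤ (((A.card + 1) / 2 : ℕ) : ℝ) / A.card := by
      rw [le_div_iff₀ hA0]
      linarith
    have hmr2 : (1 : ℝ) / 3 ≤ ((A.card : ℝ) - (((A.card + 1) / 2 : ℕ) : ℝ)) / A.card := by
      rw [le_div_iff₀ hA0]
      linarith
    have hb1 : (B.card : ℝ) / A.card ≤ 1 := (div_le_one hA0).mpr hBAr
    have hq : (1 : ℝ) / 6 ≤ ((((A.card + 1) / 2 : ℕ) : ℝ) / A.card) *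
        (((A.card : ℝ) - (((A.card + 1) / 2 : ℕ) : ℝ)) / A.card) := by
      have := mul_le_mul hmr1 hmr2 (by norm_num) (le_trans (by norm_num) hmr1)
      linarith
    have hbq : (0 : ℝ) ≤ (B.card : ℝ) / A.card := by positivity
    calc C / 8 * ((B.card : ℝ) / A.card) ≤ C / 8 * 1 := by
          refine mul_le_mul_of_nonneg_left hb1 (by positivity)
      _ ≤ C * ((((A.card + 1) / 2 : ℕ) : ℝ) / A.card *
            (((A.card : ℝ) - (((A.card + 1) / 2 : ℕ) : ℝ)) / A.card)) := by
          nlinarith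
      _ = C * ((((A.card + 1) / 2 : ℕ) : ℝ) / A.card) *
            (((A.card : ℝ) - (((A.card + 1) / 2 : ℕ) : ℝ)) / A.card) := by ring
end

section
/- Let k ≥ 2 be an integer, C ∈ (0,1], and A ⊆ G a finite set that is strongly connected of degree k with constant C: for all partitions A = E ⊔ F into nonempty disjoint sets, ∑_x (E∘F)(x)·((A*_{k-2}A)∘(A*_{k-2}A))(x) ≥ C(|E|/|A|)(|F|/|A|)T_k(A). Define S = {h ∈ G : ((A*_{k-2}A)∘(A*_{k-2}A))(h) ≥ C·T_k(A)/|A|^2}. Then A is contained in a single coset of the subgroup ⟨S⟩ generated by S; i.e., there exists a ∈ G with A ⊆ ⟨S⟩ + a. -/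
open Finset Pointwise

variable {G : Type*} [AddCommGroup G] [DecidableEq G]

theorem stmt11 (k : ℕ) (hk : 2 ≤ k) (A : Finset G) (C : ℝ) (hC0 : 0 < C) (hC1 : C ≤ 1)
    (hconn : ∀ E F : Finset G, E.Nonempty → F.Nonempty → Disjoint E F → E ∪ F = A →
      C * ((E.card : ℝ) / A.card) * ((F.card : ℝ) / A.card) * (Tk k A : ℝ) ≤
        (eWeight k A E F : ℝ)) :
    ∃ a : G, ∀ x ∈ A,
      x - a ∈ AddSubgroup.closure
        {h : G | C * (Tk k A : ℝ) / (A.card : ℝ) ^ 2 ≤ (circConv k A h : ℝ)} := by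
  classical
  rcases A.eq_empty_or_nonempty with rfl | ⟨a, ha⟩
  · exact ⟨0, by simp⟩
  set S : Set G := {h : G | C * (Tk k A : ℝ) / (A.card : ℝ) ^ 2 ≤ (circConv k A h : ℝ)} with hS
  set H := AddSubgroup.closure S with hH
  refine ⟨a, fun x hx => ?_⟩
  by_contra hxH
  set E := A.filter (fun y => y - a ∈ H) with hE
  set F := A \ E with hF
  have haE : a ∈ E := by
    simp [hE, ha, AddSubgroup.zero_mem]
  have hxF : x ∈ F := by
    simp only [hF, Finset.mem_sdiff, hE, Finset.mem_filter]
    exact ⟨hx, fun h => hxH h.2⟩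
  have hEF : Disjoint E F := Finset.disjoint_sdiff
  have hUnion : E ∪ F = A := Finset.union_sdiff_of_subset (Finset.filter_subset _ _)
  have hA0 : (0:ℝ) < A.card := by
    exact_mod_cast Finset.card_pos.mpr ⟨a, ha⟩
  have key : ∃ s ∈ E - F, C * (Tk k A : ℝ) / (A.card : ℝ) ^ 2 ≤ (circConv k A s : ℝ) := by
    by_contra hno
    push_neg at hno
    have hsum : ∑ s ∈ E - F, (circ2 E F s : ℝ) = (E.card : ℝ) * F.card := by
      have hcard := Finset.card_eq_sum_card_fiberwise
        (f := fun p : G × G => p.1 - p.2) (s := E ×ˢ F) (t := E - F)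
        (fun p hp => by
          obtain ⟨hp1, hp2⟩ := Finset.mem_product.mp hp
          exact Finset.sub_mem_sub hp1 hp2)
      have : ((E ×ˢ F).card : ℝ) = ∑ s ∈ E - F, (circ2 E F s : ℝ) := by
        rw [hcard]; push_cast [circ2]; rfl
      rw [← this, Finset.card_product]; push_cast; ring
    have hs0 : a - x ∈ E - F := Finset.sub_mem_sub haE hxF
    have hc0 : 0 < (circ2 E F (a - x) : ℝ) := by
      have : (a, x) ∈ (E ×ˢ F).filter fun p => p.1 - p.2 = a - x := by
        simp [haE, hxF]
      have := Finset.card_pos.mpr ⟨_, this⟩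
      exact_mod_cast this
    have hlt : (eWeight k A E F : ℝ) <
        ∑ s ∈ E - F, (circ2 E F s : ℝ) * (C * (Tk k A : ℝ) / (A.card : ℝ) ^ 2) := by
      have : (eWeight k A E F : ℝ) = ∑ s ∈ E - F, (circ2 E F s : ℝ) * (circConv k A s : ℝ) := by
        rw [eWeight]; push_cast; rfl
      rw [this]
      refine Finset.sum_lt_sum (fun s hs => ?_) ⟨a - x, hs0, ?_⟩
      · exact mul_le_mul_of_nonneg_left (hno s hs).le (by positivity)
      · exact mul_lt_mul_of_pos_left (hno _ hs0) hc0
    rw [← Finset.sum_mul, hsum] at hlt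
    have hle := hconn E F ⟨a, haE⟩ ⟨x, hxF⟩ hEF hUnion
    have heq : C * ((E.card : ℝ) / A.card) * ((F.card : ℝ) / A.card) * (Tk k A : ℝ)
        = (E.card : ℝ) * F.card * (C * (Tk k A : ℝ) / (A.card : ℝ) ^ 2) := by
      field_simp
    rw [heq] at hle
    exact absurd (hle.trans_lt hlt) (lt_irrefl _)
  obtain ⟨s, hs, hsθ⟩ := key
  obtain ⟨e, he, f, hf, rfl⟩ := Finset.mem_sub.mp hs
  have hsH : e - f ∈ H := AddSubgroup.subset_closure hsθ
  have heH : e - a ∈ H := (Finset.mem_filter.mp he).2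
  have hfH : f - a ∈ H := by
    have : f - a = (e - a) - (e - f) := by abel
    rw [this]; exact H.sub_mem heH hsH
  have : f ∈ E := Finset.mem_filter.mpr ⟨(Finset.mem_sdiff.mp hf).1, hfH⟩
  exact (Finset.mem_sdiff.mp hf).2 this
end

section
/- Let k ≥ 2 be an integer, ε₁ ∈ [0,1], and A ⊆ G a finite set. Define e(E,F) = ∑_x (E∘F)(x)·((A*_{k-2}A)∘(A*_{k-2}A))(x) for E, F ⊆ A, and c_E = |E|/|A|. Then there exists a partition A = A_1 ⊔ ⋯ ⊔ A_l such that: (1) e(A_i, A_j) ≤ ε₁ c_{A_i} c_{A_j} T_k(A) for all i ≠ j; and (2) for each i and each partition A_i = E ⊔ F into disjoint sets, e(E,F) ≥ ε₁ c_E c_F T_k(A). -/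
open Finset Pointwise

variable {G : Type*} [AddCommGroup G] [DecidableEq G]

lemma circ2_eq_zero {E F : Finset G} {x : G} (h : x ∉ E - F) : circ2 E F x = 0 := by
  rw [circ2, Finset.card_eq_zero, Finset.filter_eq_empty_iff]
  rintro ⟨a, b⟩ hab rfl
  rw [Finset.mem_product] at hab
  exact h (Finset.sub_mem_sub hab.1 hab.2)

lemma eWeight_eq_sum (k : ℕ) (A : Finset G) {E F S : Finset G} (h : E - F ⊆ S) :
    eWeight k A E F = ∑ x ∈ S, circ2 E F x * circConv k A x := by
  rw [eWeight]
  exact Finset.sum_subset h (fun x _ hx => by rw [circ2_eq_zero hx, zero_mul])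

lemma circ2_union_left {E E' : Finset G} (h : Disjoint E E') (F : Finset G) (x : G) :
    circ2 (E ∪ E') F x = circ2 E F x + circ2 E' F x := by
  rw [circ2, circ2, circ2, Finset.union_product, Finset.filter_union,
    Finset.card_union_of_disjoint]
  exact Finset.disjoint_filter_filter (Finset.disjoint_product.mpr (Or.inl h))

lemma eWeight_union_left (k : ℕ) (A : Finset G) {E E' : Finset G} (h : Disjoint E E')
    (F : Finset G) : eWeight k A (E ∪ E') F = eWeight k A E F + eWeight k A E' F := by
  rw [eWeight_eq_sum k A (subset_refl ((E ∪ E') - F)),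
    eWeight_eq_sum k A (Finset.sub_subset_sub (Finset.subset_union_left (s₂ := E')) (subset_refl F)),
    eWeight_eq_sum k A (Finset.sub_subset_sub (Finset.subset_union_right (s₁ := E)) (subset_refl F)),
    ← Finset.sum_add_distrib]
  exact Finset.sum_congr rfl fun x _ => by rw [circ2_union_left h, add_mul]

lemma circ2_neg (E F : Finset G) (x : G) : circ2 F E (-x) = circ2 E F x := by
  rw [circ2, circ2]
  apply Finset.card_bij' (fun p _ => Prod.swap p) (fun p _ => Prod.swap p)
  · rintro ⟨a, b⟩ hab
    simp only [Finset.mem_filter, Finset.mem_product] at hab ⊢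
    exact ⟨⟨hab.1.2, hab.1.1⟩, by show b - a = x; rw [← neg_sub a b, hab.2, neg_neg]⟩
  · rintro ⟨a, b⟩ hab
    simp only [Finset.mem_filter, Finset.mem_product] at hab ⊢
    exact ⟨⟨hab.1.2, hab.1.1⟩, by show b - a = -x; rw [← neg_sub a b, hab.2]⟩
  · intros; simp
  · intros; simp

lemma circConv_neg (k : ℕ) (A : Finset G) (x : G) : circConv k A (-x) = circConv k A x := by
  rw [circConv, circConv]
  apply Finset.card_bij' (fun p _ => Prod.swap p) (fun p _ => Prod.swap p)
  · rintro ⟨a, b⟩ hab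
    simp only [Finset.mem_filter, Finset.mem_product] at hab ⊢
    exact ⟨⟨hab.1.2, hab.1.1⟩, by
      show (∑ i, b i) - (∑ i, a i) = x
      rw [← neg_sub (∑ i, a i) (∑ i, b i), hab.2, neg_neg]⟩
  · rintro ⟨a, b⟩ hab
    simp only [Finset.mem_filter, Finset.mem_product] at hab ⊢
    exact ⟨⟨hab.1.2, hab.1.1⟩, by
      show (∑ i, b i) - (∑ i, a i) = -x
      rw [← neg_sub (∑ i, a i) (∑ i, b i), hab.2]⟩
  · intros; simp
  · intros; simp

lemma eWeight_comm (k : ℕ) (A E F : Finset G) : eWeight k A E F = eWeight k A F E := by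
  rw [eWeight, eWeight]
  apply Finset.sum_nbij' (fun x => -x) (fun x => -x)
  · intro x hx
    rw [Finset.mem_sub] at hx ⊢
    obtain ⟨a, ha, b, hb, rfl⟩ := hx
    exact ⟨b, hb, a, ha, by abel⟩
  · intro x hx
    rw [Finset.mem_sub] at hx ⊢
    obtain ⟨a, ha, b, hb, rfl⟩ := hx
    exact ⟨b, hb, a, ha, by abel⟩
  · intros; simp
  · intros; simp
  · intro x _
    rw [circ2_neg, circConv_neg]

/-- The weight `w(B,C) = e(B,C) - ε₁ c_B c_C T_k(A)` (placeholder Tk). -/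
noncomputable def wt (k : ℕ) (ε₁ : ℝ) (A : Finset G) (T : ℝ) (B C : Finset G) : ℝ :=
  (eWeight k A B C : ℝ) - ε₁ * (B.card / A.card) * (C.card / A.card) * T

lemma wt_union_left (k : ℕ) (ε₁ : ℝ) (A : Finset G) (T : ℝ) {B C : Finset G}
    (h : Disjoint B C) (D : Finset G) :
    wt k ε₁ A T (B ∪ C) D = wt k ε₁ A T B D + wt k ε₁ A T C D := by
  simp only [wt, eWeight_union_left k A h, Finset.card_union_of_disjoint h]
  push_cast
  ring

lemma wt_union_right (k : ℕ) (ε₁ : ℝ) (A : Finset G) (T : ℝ) {B C : Finset G}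
    (h : Disjoint B C) (D : Finset G) :
    wt k ε₁ A T D (B ∪ C) = wt k ε₁ A T D B + wt k ε₁ A T D C := by
  simp only [wt, eWeight_comm k A D, eWeight_union_left k A h, Finset.card_union_of_disjoint h]
  push_cast
  ring

lemma wt_add_comm (k : ℕ) (ε₁ : ℝ) (A : Finset G) (T : ℝ) (B C : Finset G) :
    wt k ε₁ A T B C + wt k ε₁ A T C B =
      2 * ((eWeight k A B C : ℝ) - ε₁ * (B.card / A.card) * (C.card / A.card) * T) := by
  simp only [wt, eWeight_comm k A C B]
  ring

/-- The quantity minimized over partitions (full double sum minus diagonal). -/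
noncomputable def fP (k : ℕ) (ε₁ : ℝ) (A : Finset G) (T : ℝ) (P : Finset (Finset G)) : ℝ :=
  (∑ B ∈ P, ∑ C ∈ P, wt k ε₁ A T B C) - ∑ B ∈ P, wt k ε₁ A T B B

lemma fP_insert_insert (k : ℕ) (ε₁ : ℝ) (A : Finset G) (T : ℝ) {Q : Finset (Finset G)}
    {B C : Finset G} (hBC : Disjoint B C) (hne : B ≠ C) (hB : B ∉ Q) (hC : C ∉ Q)
    (hU : B ∪ C ∉ Q) :
    fP k ε₁ A T (insert B (insert C Q)) =
      fP k ε₁ A T (insert (B ∪ C) Q) + wt k ε₁ A T B C + wt k ε₁ A T C B := by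
  have hB' : B ∉ insert C Q := by simp [hne, hB]
  simp only [fP, Finset.sum_insert hB', Finset.sum_insert hC, Finset.sum_insert hU,
    wt_union_left k ε₁ A T hBC, wt_union_right k ε₁ A T hBC, Finset.sum_add_distrib]
  ring

theorem stmt12 (k : ℕ) (hk : 2 ≤ k) (ε₁ : ℝ) (hε₁0 : 0 ≤ ε₁) (hε₁1 : ε₁ ≤ 1)
    (A : Finset G) :
    ∃ (l : ℕ) (𝒜 : Fin l → Finset G),
      (∀ i j, i ≠ j → Disjoint (𝒜 i) (𝒜 j)) ∧
      (Finset.univ.biUnion 𝒜 = A) ∧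
      (∀ i j, i ≠ j →
        (eWeight k A (𝒜 i) (𝒜 j) : ℝ) ≤
          ε₁ * ((𝒜 i).card / A.card : ℝ) * ((𝒜 j).card / A.card : ℝ) * (Tk k A : ℝ)) ∧
      (∀ i, ∀ E F : Finset G, Disjoint E F → E ∪ F = 𝒜 i →
        ε₁ * ((E.card : ℝ) / A.card) * ((F.card : ℝ) / A.card) * (Tk k A : ℝ) ≤
          (eWeight k A E F : ℝ)) := by
  classical
  set T : ℝ := (Tk k A : ℝ) with hT
  -- the set of valid partitions of A into nonempty pieces
  set valid : Finset (Finset G) → Prop := fun P =>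
    (∀ B ∈ P, B.Nonempty) ∧ ((P : Set (Finset G)).PairwiseDisjoint id) ∧ P.sup id = A
    with hvalid
  rcases A.eq_empty_or_nonempty with rfl | hA
  · exact ⟨0, fun _ => ∅, fun i => i.elim0, by simp, fun i => i.elim0, fun i => i.elim0⟩
  set S : Finset (Finset (Finset G)) := A.powerset.powerset.filter valid with hS
  have hAS : {A} ∈ S := by
    simp only [hS, hvalid, Finset.mem_filter, Finset.mem_powerset]
    refine ⟨by simp, fun B hB => by simp_all, ?_, by simp⟩
    simp [Set.pairwiseDisjoint_singleton]
  obtain ⟨P, hPS, hmin⟩ := S.exists_min_image (fP k ε₁ A T) ⟨{A}, hAS⟩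
  simp only [hS, hvalid, Finset.mem_filter] at hPS
  obtain ⟨hPpow, hPne, hPdisj, hPsup⟩ := hPS
  -- first key property: cross terms are small
  have cond1 : ∀ B ∈ P, ∀ C ∈ P, B ≠ C →
      (eWeight k A B C : ℝ) ≤ ε₁ * (B.card / A.card) * (C.card / A.card) * T := by
    intro B hB C hC hne
    set Q : Finset (Finset G) := (P.erase B).erase C with hQ
    have hCQ : C ∉ Q := Finset.notMem_erase _ _
    have hBQ : B ∉ Q := fun h => Finset.notMem_erase B (P.erase C) (by
      have := Finset.mem_of_mem_erase h; exact absurd this (Finset.notMem_erase _ _))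
    have hQP : Q ⊆ P := (Finset.erase_subset _ _).trans (Finset.erase_subset _ _)
    have hdisjBC : Disjoint B C := hPdisj hB hC hne
    have hBne : B.Nonempty := hPne B hB
    have hCne : C.Nonempty := hPne C hC
    have hUQ : B ∪ C ∉ Q := by
      intro h
      have hU : B ∪ C ∈ P := hQP h
      have hUB : B ∪ C ≠ B := fun hEq => by
        have : C ⊆ B := hEq ▸ Finset.subset_union_right
        exact hCne.ne_empty (Finset.disjoint_left.mp hdisjBC.symm |> fun hd =>
          Finset.eq_empty_of_forall_notMem fun x hx => hd hx (this hx))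
      have := hPdisj hU hB hUB
      exact hBne.ne_empty (Finset.eq_empty_of_forall_notMem fun x hx =>
        Finset.disjoint_left.mp this (Finset.mem_union_left _ hx) hx)
    have hPeq : P = insert B (insert C Q) := by
      rw [hQ, Finset.insert_erase (Finset.mem_erase.mpr ⟨(Ne.symm hne), hC⟩),
        Finset.insert_erase hB]
    -- the merged partition
    set P' : Finset (Finset G) := insert (B ∪ C) Q with hP'
    have hsup' : P'.sup id = A := by
      rw [hP', Finset.sup_insert]
      rw [hPeq, Finset.sup_insert, Finset.sup_insert] at hPsup
      rw [← hPsup]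
      simp only [id]
      simp only [Finset.sup_eq_union, Finset.union_assoc]
    have hP'S : P' ∈ S := by
      simp only [hS, hvalid, Finset.mem_filter, Finset.mem_powerset]
      refine ⟨fun D hD => Finset.mem_powerset.mpr (hsup' ▸ Finset.le_sup (f := id) hD), ?_, ?_, hsup'⟩
      · intro D hD
        rw [hP', Finset.mem_insert] at hD
        rcases hD with rfl | hD
        · exact hBne.mono Finset.subset_union_left
        · exact hPne D (hQP hD)
      · intro D hD D' hD' hDD'
        simp only [hP', Finset.coe_insert, Set.mem_insert_iff, Finset.mem_coe] at hD hD'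
        have aux : ∀ D'' ∈ Q, Disjoint (B ∪ C) D'' := by
          intro D'' hD''
          have hD''P := hQP hD''
          have h1 : D'' ≠ B := fun h => hBQ (h ▸ hD'')
          have h2 : D'' ≠ C := fun h => hCQ (h ▸ hD'')
          exact Finset.disjoint_union_left.mpr
            ⟨hPdisj hB hD''P (Ne.symm h1), hPdisj hC hD''P (Ne.symm h2)⟩
        rcases hD with rfl | hD <;> rcases hD' with rfl | hD'
        · exact absurd rfl hDD'
        · exact aux D' hD'
        · exact (aux D hD).symm
        · exact hPdisj (hQP hD) (hQP hD') hDD'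
    have hle := hmin P' hP'S
    have heq : fP k ε₁ A T P = fP k ε₁ A T P' + wt k ε₁ A T B C + wt k ε₁ A T C B := by
      rw [hPeq] at *
      exact fP_insert_insert k ε₁ A T hdisjBC hne hBQ hCQ hUQ
    have hsum : wt k ε₁ A T B C + wt k ε₁ A T C B ≤ 0 := by linarith
    rw [wt_add_comm] at hsum
    linarith
  -- second key property: internal splits are big
  have cond2 : ∀ B ∈ P, ∀ E F : Finset G, Disjoint E F → E ∪ F = B →
      ε₁ * ((E.card : ℝ) / A.card) * ((F.card : ℝ) / A.card) * T ≤ (eWeight k A E F : ℝ) := by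
    intro B hB E F hEF hEFB
    rcases E.eq_empty_or_nonempty with rfl | hEne
    · simp [eWeight]
    rcases F.eq_empty_or_nonempty with rfl | hFne
    · simp [eWeight]
    have hEneF : E ≠ F := fun h => hEne.ne_empty ((Finset.disjoint_self_iff_empty E).mp (h ▸ hEF))
    have hEB : E ⊆ B := hEFB ▸ Finset.subset_union_left
    have hFB : F ⊆ B := hEFB ▸ Finset.subset_union_right
    set Q : Finset (Finset G) := P.erase B with hQ
    have hBQ : B ∉ Q := Finset.notMem_erase _ _
    have hQP : Q ⊆ P := Finset.erase_subset _ _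
    have hsubQ : ∀ D, D ⊆ B → D.Nonempty → D ∉ Q := by
      intro D hDB hDne hDQ
      have hDP := hQP hDQ
      have hDB' : D ≠ B := fun h => hBQ (h ▸ hDQ)
      have := hPdisj hDP hB hDB'
      exact hDne.ne_empty (Finset.eq_empty_of_forall_notMem fun x hx =>
        Finset.disjoint_left.mp this hx (hDB hx))
    have hEQ : E ∉ Q := hsubQ E hEB hEne
    have hFQ : F ∉ Q := hsubQ F hFB hFne
    have hPeq : P = insert (E ∪ F) Q := by rw [hQ, hEFB, Finset.insert_erase hB]
    set P'' : Finset (Finset G) := insert E (insert F Q) with hP''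
    have hsup'' : P''.sup id = A := by
      rw [hP'', Finset.sup_insert, Finset.sup_insert]
      rw [hPeq, Finset.sup_insert] at hPsup
      rw [← hPsup]
      simp only [id]
      simp only [Finset.sup_eq_union, Finset.union_assoc]
    have hP''S : P'' ∈ S := by
      simp only [hS, hvalid, Finset.mem_filter, Finset.mem_powerset]
      refine ⟨fun D hD => Finset.mem_powerset.mpr (hsup'' ▸ Finset.le_sup (f := id) hD), ?_, ?_, hsup''⟩
      · intro D hD
        rw [hP'', Finset.mem_insert, Finset.mem_insert] at hD
        rcases hD with rfl | rfl | hD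
        · exact hEne
        · exact hFne
        · exact hPne D (hQP hD)
      · intro D hD D' hD' hDD'
        simp only [hP'', Finset.coe_insert, Set.mem_insert_iff, Finset.mem_coe] at hD hD'
        have aux : ∀ D'' ∈ Q, ∀ D₀, D₀ ⊆ B → Disjoint D₀ D'' := by
          intro D'' hD'' D₀ hD₀
          have hD''P := hQP hD''
          have h1 : D'' ≠ B := fun h => hBQ (h ▸ hD'')
          exact (hPdisj hB hD''P (Ne.symm h1)).mono_left hD₀
        rcases hD with rfl | rfl | hD <;> rcases hD' with rfl | rfl | hD'
        · exact absurd rfl hDD'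
        · exact hEF
        · exact aux D' hD' D hEB
        · exact hEF.symm
        · exact absurd rfl hDD'
        · exact aux D' hD' D hFB
        · exact (aux D hD D' hEB).symm
        · exact (aux D hD D' hFB).symm
        · exact hPdisj (hQP hD) (hQP hD') hDD'
    have hle := hmin P'' hP''S
    have hUQ : E ∪ F ∉ Q := hsubQ (E ∪ F) (le_of_eq hEFB) (hEne.mono Finset.subset_union_left)
    have heq : fP k ε₁ A T P'' = fP k ε₁ A T P + wt k ε₁ A T E F + wt k ε₁ A T F E := by
      rw [hPeq]
      exact fP_insert_insert k ε₁ A T hEF hEneF hEQ hFQ hUQ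
    have hsum : 0 ≤ wt k ε₁ A T E F + wt k ε₁ A T F E := by linarith
    rw [wt_add_comm] at hsum
    linarith
  -- package the partition using an indexing by `Fin P.card`
  refine ⟨P.card, fun i => ((P.equivFin.symm i : P) : Finset G), ?_, ?_, ?_, ?_⟩
  · intro i j hij
    exact hPdisj (P.equivFin.symm i).2 (P.equivFin.symm j).2
      (fun h => hij (P.equivFin.symm.injective (Subtype.ext h)))
  · ext x
    simp only [Finset.mem_biUnion, Finset.mem_univ, true_and]
    constructor
    · rintro ⟨i, hx⟩
      have := Finset.le_sup (f := id) (P.equivFin.symm i).2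
      exact hPsup ▸ this hx
    · intro hx
      rw [← hPsup] at hx
      obtain ⟨B, hB, hxB⟩ := Finset.mem_sup.mp hx
      exact ⟨P.equivFin ⟨B, hB⟩, by simp [Equiv.symm_apply_apply]; exact hxB⟩
  · intro i j hij
    exact cond1 _ (P.equivFin.symm i).2 _ (P.equivFin.symm j).2
      (fun h => hij (P.equivFin.symm.injective (Subtype.ext h)))
  · intro i E F hd hu
    exact cond2 _ (P.equivFin.symm i).2 E F hd hu
end

section
/- Let k ≥ 2, ε₁ ∈ [0,1], and A ⊆ G finite. Suppose A = A_1 ⊔ ⋯ ⊔ A_l is a partition such that e(A_i, A_j) ≤ ε₁ (|A_i|/|A|)(|A_j|/|A|) T_k(A) for all i ≠ j, where e(E,F) = ∑_x (E∘F)(x)·((A*_{k-2}A)∘(A*_{k-2}A))(x). Then ∑_{i=1}^l T_k(A_i) ≥ (1 − (2k−1)ε₁)·T_k(A). -/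
open Finset Pointwise

variable {G : Type*} [AddCommGroup G] [DecidableEq G]

lemma eWeight_eq_card (n : ℕ) (A E F : Finset G) :
    eWeight (n + 2) A E F =
      (((E ×ˢ F) ×ˢ ((Fintype.piFinset fun _ : Fin (n + 1) => A) ×ˢ
          (Fintype.piFinset fun _ : Fin (n + 1) => A))).filter fun q =>
        q.1.1 - q.1.2 = (∑ i, q.2.1 i) - (∑ i, q.2.2 i)).card := by
  rw [Finset.card_eq_sum_card_fiberwise (f := fun q => q.1.1 - q.1.2) (t := E - F)]
  · unfold eWeight
    refine Finset.sum_congr rfl fun x hx => ?_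
    rw [Finset.filter_filter]
    have hpred : ∀ q ∈ ((E ×ˢ F) ×ˢ ((Fintype.piFinset fun _ : Fin (n + 1) => A) ×ˢ
          (Fintype.piFinset fun _ : Fin (n + 1) => A))),
        ((q.1.1 - q.1.2 = (∑ i, q.2.1 i) - (∑ i, q.2.2 i) ∧ q.1.1 - q.1.2 = x) ↔
          ((fun p : G × G => p.1 - p.2 = x) q.1 ∧
            (fun t : (Fin (n+1) → G) × (Fin (n+1) → G) => (∑ i, t.1 i) - (∑ i, t.2 i) = x) q.2)) := by
      intro q _
      constructor
      · rintro ⟨h1, h2⟩; exact ⟨h2, by dsimp only; rw [← h1]; exact h2⟩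
      · rintro ⟨h1, h2⟩
        refine ⟨?_, h1⟩
        rw [show q.1.1 - q.1.2 = x from h1,
          show (∑ i, q.2.1 i) - (∑ i, q.2.2 i) = x from h2]
    rw [Finset.filter_congr hpred,
      Finset.filter_product (fun p : G × G => p.1 - p.2 = x)
        (fun t : (Fin (n + 1) → G) × (Fin (n + 1) → G) => (∑ i, t.1 i) - (∑ i, t.2 i) = x),
      Finset.card_product]
    rfl
  · rintro ⟨⟨a, b⟩, u, v⟩ hq
    simp only [Finset.mem_coe, Finset.mem_filter, Finset.mem_product] at hq
    exact Finset.sub_mem_sub hq.1.1.1 hq.1.1.2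

lemma card_le_eWeight (n : ℕ) (A E F : Finset G) (hE : E ⊆ A) (hF : F ⊆ A) (p q : Fin (n + 2)) :
    (((Fintype.piFinset fun _ : Fin (n + 2) => A) ×ˢ
        (Fintype.piFinset fun _ : Fin (n + 2) => A)).filter
      fun t => (∑ i, t.1 i = ∑ i, t.2 i) ∧ t.1 p ∈ E ∧ t.2 q ∈ F).card ≤
      eWeight (n + 2) A E F := by
  rw [eWeight_eq_card]
  apply Finset.card_le_card_of_injOn
    (fun t : (Fin (n + 2) → G) × (Fin (n + 2) → G) =>
      ((t.1 p, t.2 q), (Fin.removeNth (α := fun _ => G) q t.2, Fin.removeNth (α := fun _ => G) p t.1)))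
  · intro t ht
    simp only [Finset.mem_coe, Finset.mem_filter, Finset.mem_product, Fintype.mem_piFinset] at ht ⊢
    obtain ⟨⟨h1, h2⟩, hsum, hp, hq⟩ := ht
    refine ⟨⟨⟨hp, hq⟩, fun i => h2 _, fun i => h1 _⟩, ?_⟩
    simp only [Fin.removeNth]
    rw [sub_eq_sub_iff_add_eq_add, ← Fin.sum_univ_succAbove t.1 p, add_comm _ (t.2 q),
      ← Fin.sum_univ_succAbove t.2 q]
    exact hsum
  · intro t ht t' ht' heq
    simp only [Prod.mk.injEq] at heq
    obtain ⟨⟨c1, c2⟩, c3, c4⟩ := heq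
    have e1 : t.1 = t'.1 := by
      rw [← Fin.insertNth_self_removeNth p t.1, ← Fin.insertNth_self_removeNth p t'.1, c1, c4]
    have e2 : t.2 = t'.2 := by
      rw [← Fin.insertNth_self_removeNth q t.2, ← Fin.insertNth_self_removeNth q t'.2, c2, c3]
    exact Prod.ext e1 e2

lemma card_le_eWeight' (n : ℕ) (A E F : Finset G) (hE : E ⊆ A) (hF : F ⊆ A) (p q : Fin (n + 2)) :
    (((Fintype.piFinset fun _ : Fin (n + 2) => A) ×ˢ
        (Fintype.piFinset fun _ : Fin (n + 2) => A)).filter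
      fun t => (∑ i, t.1 i = ∑ i, t.2 i) ∧ t.2 p ∈ E ∧ t.1 q ∈ F).card ≤
      eWeight (n + 2) A E F := by
  refine le_trans (Finset.card_le_card_of_injOn (fun t => (t.2, t.1)) ?_ ?_)
    (card_le_eWeight n A E F hE hF p q)
  · intro t ht
    simp only [Finset.mem_coe, Finset.mem_filter, Finset.mem_product] at ht ⊢
    exact ⟨⟨ht.1.2, ht.1.1⟩, ht.2.1.symm, ht.2.2⟩
  · intro t _ t' _ heq
    simp only [Prod.mk.injEq] at heq
    exact Prod.ext heq.2 heq.1

set_option maxHeartbeats 2000000 in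
theorem stmt13 (k : ℕ) (hk : 2 ≤ k) (ε₁ : ℝ) (hε₁0 : 0 ≤ ε₁) (hε₁1 : ε₁ ≤ 1)
    (A : Finset G) (l : ℕ) (𝒜 : Fin l → Finset G)
    (hdisj : ∀ i j, i ≠ j → Disjoint (𝒜 i) (𝒜 j))
    (hcover : Finset.univ.biUnion 𝒜 = A)
    (hcross : ∀ i j, i ≠ j →
      (eWeight k A (𝒜 i) (𝒜 j) : ℝ) ≤
        ε₁ * ((𝒜 i).card / A.card : ℝ) * ((𝒜 j).card / A.card : ℝ) * (Tk k A : ℝ)) :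
    (1 - (2 * (k : ℝ) - 1) * ε₁) * (Tk k A : ℝ) ≤ ∑ i, (Tk k (𝒜 i) : ℝ) := by
  classical
  obtain ⟨n, rfl⟩ : ∃ n, k = n + 2 := ⟨k - 2, by omega⟩
  have hsub : ∀ i, 𝒜 i ⊆ A := fun i =>
    hcover ▸ Finset.subset_biUnion_of_mem 𝒜 (Finset.mem_univ i)
  have hmemA : ∀ x ∈ A, ∃ j, x ∈ 𝒜 j := by
    intro x hx
    rw [← hcover] at hx
    simpa using Finset.mem_biUnion.1 hx
  set piA := Fintype.piFinset fun _ : Fin (n + 2) => A with hpiA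
  set Sol := (piA ×ˢ piA).filter fun t => ∑ i, t.1 i = ∑ i, t.2 i with hSolDef
  set OD := (Finset.univ.offDiag : Finset (Fin l × Fin l)) with hOD
  set S := ∑ ij ∈ OD, eWeight (n + 2) A (𝒜 ij.1) (𝒜 ij.2) with hSdef
  set Mono : Fin l → Finset ((Fin (n + 2) → G) × (Fin (n + 2) → G)) := fun i =>
    ((Fintype.piFinset fun _ : Fin (n + 2) => 𝒜 i) ×ˢ
      (Fintype.piFinset fun _ : Fin (n + 2) => 𝒜 i)).filter
        fun t => ∑ i, t.1 i = ∑ i, t.2 i with hMono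
  set Bad1 : Fin (n + 2) → Finset ((Fin (n + 2) → G) × (Fin (n + 2) → G)) := fun m =>
    Sol.filter fun t => ∃ ij ∈ OD, t.1 0 ∈ 𝒜 ij.1 ∧ t.2 m ∈ 𝒜 ij.2 with hBad1
  set Bad2 : Fin (n + 1) → Finset ((Fin (n + 2) → G) × (Fin (n + 2) → G)) := fun m =>
    Sol.filter fun t => ∃ ij ∈ OD, t.2 0 ∈ 𝒜 ij.1 ∧ t.1 m.succ ∈ 𝒜 ij.2 with hBad2
  -- covering
  have hcoverSol : Sol ⊆ (Finset.univ.biUnion Mono) ∪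
      ((Finset.univ.biUnion Bad1) ∪ (Finset.univ.biUnion Bad2)) := by
    intro t ht
    have htS := ht
    simp only [hSolDef, hpiA, Finset.mem_filter, Finset.mem_product,
      Fintype.mem_piFinset] at htS
    obtain ⟨⟨h1, h2⟩, hsum⟩ := htS
    obtain ⟨i, hi⟩ := hmemA _ (h1 0)
    by_cases hall2 : ∀ m, t.2 m ∈ 𝒜 i
    · by_cases hall1 : ∀ m, t.1 m ∈ 𝒜 i
      · refine Finset.mem_union_left _ (Finset.mem_biUnion.2 ⟨i, Finset.mem_univ i, ?_⟩)
        simp only [hMono, Finset.mem_filter, Finset.mem_product, Fintype.mem_piFinset]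
        exact ⟨⟨hall1, hall2⟩, hsum⟩
      · push_neg at hall1
        obtain ⟨m, hm⟩ := hall1
        have hm0 : m ≠ 0 := fun h => hm (h ▸ hi)
        obtain ⟨m', rfl⟩ := Fin.exists_succ_eq_of_ne_zero hm0
        obtain ⟨j, hj⟩ := hmemA _ (h1 m'.succ)
        have hij : (i, j) ∈ OD :=
          Finset.mem_offDiag.2 ⟨Finset.mem_univ _, Finset.mem_univ _,
            fun h => hm (by rw [show i = j from h]; exact hj)⟩
        refine Finset.mem_union_right _ (Finset.mem_union_right _
          (Finset.mem_biUnion.2 ⟨m', Finset.mem_univ _, ?_⟩))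
        exact Finset.mem_filter.2 ⟨ht, ⟨(i, j), hij, hall2 0, hj⟩⟩
    · push_neg at hall2
      obtain ⟨m, hm⟩ := hall2
      obtain ⟨j, hj⟩ := hmemA _ (h2 m)
      have hij : (i, j) ∈ OD :=
        Finset.mem_offDiag.2 ⟨Finset.mem_univ _, Finset.mem_univ _,
          fun h => hm (by rw [show i = j from h]; exact hj)⟩
      refine Finset.mem_union_right _ (Finset.mem_union_left _
        (Finset.mem_biUnion.2 ⟨m, Finset.mem_univ _, ?_⟩))
      exact Finset.mem_filter.2 ⟨ht, ⟨(i, j), hij, hi, hj⟩⟩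
  -- bad sets are small
  have hBad1card : ∀ m : Fin (n + 2), (Bad1 m).card ≤ S := by
    intro m
    have hsub1 : Bad1 m ⊆ OD.biUnion fun ij =>
        Sol.filter fun t => t.1 0 ∈ 𝒜 ij.1 ∧ t.2 m ∈ 𝒜 ij.2 := by
      intro t ht
      obtain ⟨htS, ij, hij, hc⟩ := Finset.mem_filter.1 ht
      exact Finset.mem_biUnion.2 ⟨ij, hij, Finset.mem_filter.2 ⟨htS, hc⟩⟩
    refine le_trans (le_trans (Finset.card_le_card hsub1) (Finset.card_biUnion_le)) ?_
    refine Finset.sum_le_sum fun ij _ => ?_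
    rw [hSolDef, Finset.filter_filter]
    exact card_le_eWeight n A (𝒜 ij.1) (𝒜 ij.2) (hsub _) (hsub _) 0 m
  have hBad2card : ∀ m : Fin (n + 1), (Bad2 m).card ≤ S := by
    intro m
    have hsub2 : Bad2 m ⊆ OD.biUnion fun ij =>
        Sol.filter fun t => t.2 0 ∈ 𝒜 ij.1 ∧ t.1 m.succ ∈ 𝒜 ij.2 := by
      intro t ht
      obtain ⟨htS, ij, hij, hc⟩ := Finset.mem_filter.1 ht
      exact Finset.mem_biUnion.2 ⟨ij, hij, Finset.mem_filter.2 ⟨htS, hc⟩⟩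
    refine le_trans (le_trans (Finset.card_le_card hsub2) (Finset.card_biUnion_le)) ?_
    refine Finset.sum_le_sum fun ij _ => ?_
    rw [hSolDef, Finset.filter_filter]
    exact card_le_eWeight' n A (𝒜 ij.1) (𝒜 ij.2) (hsub _) (hsub _) 0 m.succ
  -- key counting inequality
  have hkey : Tk (n + 2) A ≤ (∑ i, Tk (n + 2) (𝒜 i)) + ((n + 2) * S + (n + 1) * S) := by
    have h0 : Tk (n + 2) A = Sol.card := rfl
    rw [h0]
    calc Sol.card ≤ ((Finset.univ.biUnion Mono) ∪
          ((Finset.univ.biUnion Bad1) ∪ (Finset.univ.biUnion Bad2))).card :=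
        Finset.card_le_card hcoverSol
      _ ≤ (Finset.univ.biUnion Mono).card +
          ((Finset.univ.biUnion Bad1).card + (Finset.univ.biUnion Bad2).card) :=
        le_trans (Finset.card_union_le _ _)
          (by gcongr; exact Finset.card_union_le _ _)
      _ ≤ (∑ i, (Mono i).card) + ((∑ m : Fin (n + 2), (Bad1 m).card) +
          (∑ m : Fin (n + 1), (Bad2 m).card)) := by
        gcongr <;> exact Finset.card_biUnion_le
      _ ≤ (∑ i, Tk (n + 2) (𝒜 i)) + ((n + 2) * S + (n + 1) * S) := by
        gcongr with i hi
        · exact le_of_eq rfl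
        · calc ∑ m : Fin (n + 2), (Bad1 m).card ≤ ∑ _m : Fin (n + 2), S :=
              Finset.sum_le_sum fun m _ => hBad1card m
            _ = (n + 2) * S := by simp [mul_comm]
        · calc ∑ m : Fin (n + 1), (Bad2 m).card ≤ ∑ _m : Fin (n + 1), S :=
              Finset.sum_le_sum fun m _ => hBad2card m
            _ = (n + 1) * S := by simp [mul_comm]
  -- fractions sum to at most one
  have hfrac : ∑ ij ∈ OD, ((𝒜 ij.1).card / A.card : ℝ) * ((𝒜 ij.2).card / A.card) ≤ 1 := by
    by_cases hA : (A.card : ℝ) = 0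
    · have hAe : A = ∅ := by
        have := Finset.card_eq_zero.1 (by exact_mod_cast hA)
        exact this
      have : ∀ i, 𝒜 i = ∅ := fun i =>
        Finset.subset_empty.1 (hAe ▸ hsub i)
      simp [this]
    · have hle : ∑ ij ∈ OD, ((𝒜 ij.1).card / A.card : ℝ) * ((𝒜 ij.2).card / A.card) ≤
          ∑ ij ∈ (Finset.univ ×ˢ Finset.univ : Finset (Fin l × Fin l)),
            ((𝒜 ij.1).card / A.card : ℝ) * ((𝒜 ij.2).card / A.card) := by
        refine Finset.sum_le_sum_of_subset_of_nonneg ?_ ?_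
        · intro ij hij
          exact Finset.mem_product.2 ⟨Finset.mem_univ _, Finset.mem_univ _⟩
        · intro ij _ _
          positivity
      have hsumN : ∑ i, (𝒜 i).card = A.card := by
        rw [← hcover]
        exact (Finset.card_biUnion fun i _ j _ h => hdisj i j h).symm
      have hsumcard : ∑ i, ((𝒜 i).card : ℝ) = A.card := by exact_mod_cast hsumN
      have hone : ∑ i, ((𝒜 i).card / A.card : ℝ) = 1 := by
        rw [← Finset.sum_div, hsumcard, div_self hA]
      have heq : ∑ ij ∈ (Finset.univ ×ˢ Finset.univ : Finset (Fin l × Fin l)),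
          ((𝒜 ij.1).card / A.card : ℝ) * ((𝒜 ij.2).card / A.card) = 1 := by
        rw [Finset.sum_product]
        simp only [← Finset.mul_sum]
        rw [hone]
        simp only [mul_one]
        exact hone
      exact hle.trans (le_of_eq heq)
  -- real inequality for S
  have hSreal : (S : ℝ) ≤ ε₁ * (Tk (n + 2) A : ℝ) := by
    have h1 : (S : ℝ) ≤ ∑ ij ∈ OD,
        ε₁ * ((𝒜 ij.1).card / A.card : ℝ) * ((𝒜 ij.2).card / A.card) * (Tk (n + 2) A : ℝ) := by
      rw [hSdef]
      push_cast
      exact Finset.sum_le_sum fun ij hij =>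
        hcross ij.1 ij.2 (Finset.mem_offDiag.1 hij).2.2
    calc (S : ℝ) ≤ _ := h1
      _ = ε₁ * (Tk (n + 2) A : ℝ) *
          ∑ ij ∈ OD, ((𝒜 ij.1).card / A.card : ℝ) * ((𝒜 ij.2).card / A.card) := by
        rw [Finset.mul_sum]; exact Finset.sum_congr rfl fun ij _ => by ring
      _ ≤ ε₁ * (Tk (n + 2) A : ℝ) * 1 := by
        have hT : (0 : ℝ) ≤ ε₁ * (Tk (n + 2) A : ℝ) := by positivity
        exact mul_le_mul_of_nonneg_left hfrac hT
      _ = ε₁ * (Tk (n + 2) A : ℝ) := mul_one _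
  -- conclude
  have hkeyR : (Tk (n + 2) A : ℝ) ≤ (∑ i, (Tk (n + 2) (𝒜 i) : ℝ)) +
      ((n : ℝ) + 2) * S + ((n : ℝ) + 1) * S := by
    have h := (Nat.cast_le (α := ℝ)).2 hkey
    push_cast at h
    linarith
  have hc1 : ((n : ℝ) + 2) * (S : ℝ) + ((n : ℝ) + 1) * S ≤
      (2 * (n : ℝ) + 3) * (ε₁ * (Tk (n + 2) A : ℝ)) := by
    have h := mul_le_mul_of_nonneg_left hSreal (by positivity : (0 : ℝ) ≤ 2 * (n : ℝ) + 3)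
    nlinarith [h, Nat.cast_nonneg (α := ℝ) S]
  push_cast
  rw [show (1 - (2 * ((n : ℝ) + 2) - 1) * ε₁) * (Tk (n + 2) A : ℝ) =
      (Tk (n + 2) A : ℝ) - (2 * (n : ℝ) + 3) * (ε₁ * (Tk (n + 2) A : ℝ)) from by ring]
  linarith [hkeyR, hc1]
end

section
/- Let k = 2^p with p ≥ 1, β ∈ [0,1], and A ⊆ G finite. Suppose there is C ∈ (0,1] and B ⊆ A with |B| ≥ β|A| such that for all disjoint E, F with E ⊔ F = B: ∑_x (E∘F)(x)·((A*_{k-2}A)∘(A*_{k-2}A))(x) ≥ C(|E|/|A|)(|F|/|A|)T_k(A). Then B is connected of degree k with constant Cβ²/8: for every B' ⊆ B, T_k(B') ≥ (Cβ²/8)^{2k}(|B'|/|B|)^{2k} T_k(B). -/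
open Finset Pointwise

variable {G : Type*} [AddCommGroup G] [DecidableEq G]

set_option linter.unusedSectionVars false
set_option maxHeartbeats 1000000

noncomputable section Stmt15Aux

instance : CoeFun (AddMonoidAlgebra ℝ G) (fun _ => G → ℝ) := ⟨fun f => f.coeff⟩

abbrev AddMonoidAlgebra.support (f : AddMonoidAlgebra ℝ G) : Finset G := f.coeff.support

def ind (S : Finset G) : AddMonoidAlgebra ℝ G := ∑ x ∈ S, AddMonoidAlgebra.single x (1:ℝ)

def nflip (f : AddMonoidAlgebra ℝ G) : AddMonoidAlgebra ℝ G :=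
  AddMonoidAlgebra.mapDomain (negAddMonoidHom : G →+ G) f

def phi (f : AddMonoidAlgebra ℝ G) : ℝ := ∑ x ∈ f.support, (f x)^2

def cnt (S : Finset G) (n : ℕ) (x : G) : ℕ :=
  ((Fintype.piFinset fun _ : Fin n => S).filter fun t => ∑ i, t i = x).card

lemma nflip_apply (f : AddMonoidAlgebra ℝ G) (x : G) : nflip f x = f (-x) := by
  have h : Function.Injective (⇑(negAddMonoidHom : G →+ G)) := fun a b hab =>
    neg_injective hab
  have h2 : x = (negAddMonoidHom : G →+ G) (-x) := (neg_neg x).symm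
  calc nflip f x = Finsupp.mapDomain (⇑(negAddMonoidHom : G →+ G)) f.coeff
        ((negAddMonoidHom : G →+ G) (-x)) := by rw [← h2]; rfl
    _ = f (-x) := Finsupp.mapDomain_apply h f.coeff (-x)

lemma nflip_mul (f g : AddMonoidAlgebra ℝ G) : nflip (f * g) = nflip f * nflip g :=
  AddMonoidAlgebra.mapDomain_mul (negAddMonoidHom : G →+ G) f g

lemma nflip_nflip (f : AddMonoidAlgebra ℝ G) : nflip (nflip f) = f := by
  ext x; rw [nflip_apply, nflip_apply, neg_neg]

lemma mul_apply' (f g : AddMonoidAlgebra ℝ G) (x : G) :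
    (f * g) x = ∑ y ∈ g.support, f (x - y) * g y := by
  conv_lhs => rw [← AddMonoidAlgebra.sum_coeff_single g]
  rw [Finsupp.sum, Finset.mul_sum, AddMonoidAlgebra.coeff_sum, Finsupp.finset_sum_apply]
  exact Finset.sum_congr rfl fun y _ => (AddMonoidAlgebra.coeff_mul_single_apply f (g y) y x).trans (by rw [← sub_eq_add_neg])

lemma nflip_eq_sum (g : AddMonoidAlgebra ℝ G) :
    nflip g = ∑ y ∈ g.support, AddMonoidAlgebra.single (-y) (g y) := by
  ext x
  rw [nflip_apply, AddMonoidAlgebra.coeff_sum, Finsupp.finset_sum_apply]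
  simp [AddMonoidAlgebra.coeff_single, Finsupp.single_apply, neg_eq_iff_eq_neg]

lemma mul_nflip_apply (f g : AddMonoidAlgebra ℝ G) (x : G) :
    (f * nflip g) x = ∑ y ∈ g.support, f (x + y) * g y := by
  rw [nflip_eq_sum, Finset.mul_sum, AddMonoidAlgebra.coeff_sum, Finsupp.finset_sum_apply]
  exact Finset.sum_congr rfl fun y _ => by
    rw [AddMonoidAlgebra.coeff_mul_single_apply, neg_neg]

lemma pair0 (f g : AddMonoidAlgebra ℝ G) :
    (nflip f * g) 0 = ∑ y ∈ f.support, f y * g y := by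
  rw [mul_comm, mul_nflip_apply]
  exact Finset.sum_congr rfl fun y _ => by rw [zero_add, mul_comm]

lemma phi_eq (f : AddMonoidAlgebra ℝ G) : phi f = (nflip f * f) 0 := by
  rw [pair0, phi]
  exact Finset.sum_congr rfl fun y _ => (sq (f y)).symm ▸ by ring

lemma phi_nonneg (f : AddMonoidAlgebra ℝ G) : 0 ≤ phi f :=
  Finset.sum_nonneg fun _ _ => sq_nonneg _

lemma sum_sq_le_phi (s : Finset G) (f : AddMonoidAlgebra ℝ G) :
    ∑ y ∈ s, (f y)^2 ≤ phi f := by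
  rw [← Finset.sum_filter_add_sum_filter_not s (fun y => f y = 0)]
  have h1 : ∑ y ∈ s.filter (fun y => f y = 0), (f y)^2 = 0 :=
    Finset.sum_eq_zero fun y hy => by rw [(Finset.mem_filter.1 hy).2]; ring
  rw [h1, zero_add]
  refine Finset.sum_le_sum_of_subset_of_nonneg ?_ (fun _ _ _ => sq_nonneg _)
  intro y hy
  exact Finsupp.mem_support_iff.2 (Finset.mem_filter.1 hy).2

lemma pair_sq_le (f g : AddMonoidAlgebra ℝ G) :
    ((nflip f * g) 0)^2 ≤ phi f * phi g := by
  rw [pair0]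
  calc (∑ y ∈ f.support, f y * g y)^2
      ≤ (∑ y ∈ f.support, (f y)^2) * (∑ y ∈ f.support, (g y)^2) :=
        Finset.sum_mul_sq_le_sq_mul_sq _ _ _
    _ ≤ phi f * phi g := by
        have h1 : (∑ y ∈ f.support, (f y)^2) = phi f := rfl
        rw [h1]
        exact mul_le_mul_of_nonneg_left (sum_sq_le_phi f.support g) (phi_nonneg f)

lemma csL (f g : AddMonoidAlgebra ℝ G) :
    (phi (f * g))^2 ≤ phi (f * f) * phi (g * g) := by
  have key : phi (f * g) = (nflip (nflip f * f) * (nflip g * g)) 0 := by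
    rw [phi_eq, nflip_mul, nflip_mul, nflip_nflip]; ring_nf
  have h1 : phi (nflip f * f) = phi (f * f) := by
    rw [phi_eq, phi_eq, nflip_mul, nflip_mul, nflip_nflip]; ring_nf
  have h2 : phi (nflip g * g) = phi (g * g) := by
    rw [phi_eq, phi_eq, nflip_mul, nflip_mul, nflip_nflip]; ring_nf
  calc (phi (f*g))^2 = ((nflip (nflip f * f) * (nflip g * g)) 0)^2 := by rw [key]
    _ ≤ phi (nflip f * f) * phi (nflip g * g) := pair_sq_le _ _
    _ = phi (f * f) * phi (g * g) := by rw [h1, h2]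

lemma ind_apply (S : Finset G) (x : G) : ind S x = if x ∈ S then 1 else 0 := by
  rw [ind, AddMonoidAlgebra.coeff_sum, Finsupp.finset_sum_apply]
  simp [AddMonoidAlgebra.coeff_single, Finsupp.single_apply]

lemma ind_support (S : Finset G) : (ind S).support = S := by
  ext x
  simp [Finsupp.mem_support_iff, ind_apply]

lemma cnt_zero (S : Finset G) (x : G) : cnt S 0 x = if (0:G) = x then 1 else 0 := by
  rw [cnt, Finset.card_filter]
  simp

lemma cnt_succ (S : Finset G) (n : ℕ) (x : G) :
    cnt S (n+1) x = ∑ y ∈ S, cnt S n (x - y) := by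
  rw [cnt, Finset.card_eq_sum_card_fiberwise (f := fun t => t 0) (t := S)
    (fun t ht => (Fintype.mem_piFinset.1 (Finset.mem_filter.1 ht).1) 0)]
  refine Finset.sum_congr rfl fun y hy => ?_
  refine Finset.card_nbij' (fun t => Fin.tail t) (fun u => Fin.cons y u) ?_ ?_ ?_ ?_
  · intro t ht
    simp only [Finset.mem_coe, Finset.mem_filter, Fintype.mem_piFinset] at ht ⊢
    obtain ⟨⟨h1, h2⟩, h3⟩ := ht
    refine ⟨fun i => h1 _, ?_⟩
    rw [Fin.sum_univ_succ] at h2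
    rw [← h2, h3]
    abel
  · intro u hu
    simp only [Finset.mem_coe, Finset.mem_filter, Fintype.mem_piFinset] at hu ⊢
    obtain ⟨h1, h2⟩ := hu
    have hmem : ∀ i, (Fin.cons y u : Fin (n+1) → G) i ∈ S := fun i =>
      Fin.cases hy h1 i
    refine ⟨⟨hmem, ?_⟩, ?_⟩
    · rw [Fin.sum_univ_succ]
      simp only [Fin.cons_zero, Fin.cons_succ]
      rw [h2]
      abel
    · simp
  · intro t ht
    have h3 : t 0 = y := (Finset.mem_filter.1 ht).2
    show Fin.cons y (Fin.tail t) = t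
    rw [← h3]
    exact Fin.cons_self_tail t
  · intro u _
    show Fin.tail (Fin.cons y u : Fin (n+1) → G) = u
    simp [Fin.tail_cons]

lemma ind_pow_apply (S : Finset G) (n : ℕ) (x : G) :
    (ind S ^ n) x = (cnt S n x : ℝ) := by
  induction n generalizing x with
  | zero =>
    rw [pow_zero, cnt_zero, AddMonoidAlgebra.one_def, AddMonoidAlgebra.coeff_single, Finsupp.single_apply]
    split <;> simp
  | succ n ih =>
    rw [pow_succ, mul_apply', ind_support, cnt_succ, Nat.cast_sum]
    refine Finset.sum_congr rfl fun y hy => ?_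
    rw [ih, ind_apply, if_pos hy, mul_one]

lemma sum_swap_support {h : G → ℝ} {s t : Finset G} (hs : ∀ x ∉ s, h x = 0)
    (ht : ∀ x ∉ t, h x = 0) : ∑ x ∈ s, h x = ∑ x ∈ t, h x := by
  rw [Finset.sum_subset (Finset.subset_union_left (s₁ := s) (s₂ := t))
    (fun x _ hx => hs x hx),
    Finset.sum_subset (Finset.subset_union_right (s₁ := s) (s₂ := t))
    (fun x _ hx => ht x hx)]

lemma card_filter_sub_eq {ι κ : Type*} [DecidableEq κ] (s : Finset ι) (t : Finset κ)
    (f : ι → G) (g : κ → G) (x : G) :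
    ((s ×ˢ t).filter fun p => f p.1 - g p.2 = x).card
      = ∑ y ∈ t.image g,
          (s.filter fun a => f a = x + y).card * (t.filter fun b => g b = y).card := by
  rw [Finset.card_eq_sum_card_fiberwise (f := fun p => g p.2) (t := t.image g)
    (fun p hp => Finset.mem_image_of_mem g (Finset.mem_product.1 (Finset.mem_filter.1 hp).1).2)]
  refine Finset.sum_congr rfl fun y _ => ?_
  rw [← Finset.card_product]
  congr 1
  ext p
  simp only [Finset.mem_filter, Finset.mem_product]
  constructor
  · rintro ⟨⟨⟨h1, h2⟩, h3⟩, h4⟩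
    refine ⟨⟨h1, ?_⟩, h2, h4⟩
    rw [← h3, h4]
    abel
  · rintro ⟨⟨h1, h2⟩, h3, h4⟩
    refine ⟨⟨⟨h1, h3⟩, ?_⟩, h4⟩
    rw [h2, h4]
    abel

lemma cnt_eq_zero_of_not_mem_image {S : Finset G} {k : ℕ} {y : G}
    (h : y ∉ (Fintype.piFinset fun _ : Fin k => S).image (fun t => ∑ i, t i)) :
    cnt S k y = 0 := by
  rw [cnt, Finset.card_eq_zero, Finset.filter_eq_empty_iff]
  intro t ht hsum
  exact h (Finset.mem_image.2 ⟨t, ht, hsum⟩)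

lemma cnt_eq_zero_of_not_mem_support {S : Finset G} {k : ℕ} {y : G}
    (h : y ∉ (ind S ^ k).support) : cnt S k y = 0 := by
  have := Finsupp.notMem_support_iff.1 h
  rw [ind_pow_apply] at this
  exact_mod_cast this

lemma Tk_eq_phi (k : ℕ) (S : Finset G) : (Tk k S : ℝ) = phi (ind S ^ k) := by
  have h1 : Tk k S
      = ∑ y ∈ (Fintype.piFinset fun _ : Fin k => S).image (fun t => ∑ i, t i),
          cnt S k y * cnt S k y := by
    rw [Tk]
    have hc : (((Fintype.piFinset fun _ : Fin k => S) ×ˢ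
          (Fintype.piFinset fun _ : Fin k => S)).filter
            fun t => ∑ i, t.1 i = ∑ i, t.2 i)
        = (((Fintype.piFinset fun _ : Fin k => S) ×ˢ
          (Fintype.piFinset fun _ : Fin k => S)).filter
            fun t => (∑ i, t.1 i) - (∑ i, t.2 i) = 0) := by
      apply Finset.filter_congr
      intro p _
      rw [sub_eq_zero]
    rw [hc, card_filter_sub_eq]
    refine Finset.sum_congr rfl fun y _ => ?_
    simp only [zero_add]
    rfl
  rw [h1, Nat.cast_sum, phi]
  have h2 : ∀ y ∈ (Fintype.piFinset fun _ : Fin k => S).image (fun t => ∑ i, t i),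
      ((cnt S k y * cnt S k y : ℕ) : ℝ) = ((ind S ^ k) y)^2 := by
    intro y _
    push_cast
    rw [ind_pow_apply]
    ring
  rw [Finset.sum_congr rfl h2]
  refine sum_swap_support ?_ ?_
  · intro y hy
    rw [ind_pow_apply]
    rw [cnt_eq_zero_of_not_mem_image hy]
    norm_num
  · intro y hy
    rw [Finsupp.notMem_support_iff.1 hy]
    norm_num

lemma circ2_eq (E F : Finset G) (x : G) : (circ2 E F x : ℝ) = (ind E * nflip (ind F)) x := by
  rw [mul_nflip_apply, ind_support]
  have h1 : circ2 E F x = (F.filter fun y => x + y ∈ E).card := by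
    rw [circ2]
    refine Finset.card_nbij' (fun p => p.2) (fun y => (x + y, y)) ?_ ?_ ?_ ?_
    · intro p hp
      simp only [Finset.mem_coe, Finset.mem_filter, Finset.mem_product] at hp ⊢
      obtain ⟨⟨ha, hb⟩, hc⟩ := hp
      refine ⟨hb, ?_⟩
      rw [← hc, sub_add_cancel]
      exact ha
    · intro y hy
      simp only [Finset.mem_coe, Finset.mem_filter, Finset.mem_product] at hy ⊢
      exact ⟨⟨hy.2, hy.1⟩, add_sub_cancel_right x y⟩
    · intro p hp
      simp only [Finset.mem_coe, Finset.mem_filter, Finset.mem_product] at hp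
      obtain ⟨⟨ha, hb⟩, hc⟩ := hp
      show (x + p.2, p.2) = p
      rw [← hc]
      ext <;> simp [sub_add_cancel]
    · intro y _
      rfl
  rw [h1, Finset.card_filter, Nat.cast_sum]
  refine Finset.sum_congr rfl fun y hy => ?_
  rw [ind_apply, ind_apply, if_pos hy, mul_one]
  split <;> simp

lemma circConv_eq (k : ℕ) (A : Finset G) (x : G) :
    (circConv k A x : ℝ) = ((ind A ^ (k-1)) * nflip (ind A ^ (k-1))) x := by
  rw [circConv, card_filter_sub_eq, mul_nflip_apply, Nat.cast_sum]
  have h2 : ∀ y,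
      (((Fintype.piFinset fun _ : Fin (k-1) => A).filter fun a => ∑ i, a i = x + y).card *
        ((Fintype.piFinset fun _ : Fin (k-1) => A).filter fun b => ∑ i, b i = y).card : ℕ)
      = cnt A (k-1) (x+y) * cnt A (k-1) y := fun y => rfl
  calc ∑ y ∈ (Fintype.piFinset fun _ : Fin (k-1) => A).image (fun t => ∑ i, t i),
        ((((Fintype.piFinset fun _ : Fin (k-1) => A).filter fun a => ∑ i, a i = x + y).card *
        ((Fintype.piFinset fun _ : Fin (k-1) => A).filter fun b => ∑ i, b i = y).card : ℕ) : ℝ)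
      = ∑ y ∈ (Fintype.piFinset fun _ : Fin (k-1) => A).image (fun t => ∑ i, t i),
          (ind A ^ (k-1)) (x + y) * (ind A ^ (k-1)) y := by
        refine Finset.sum_congr rfl fun y _ => ?_
        rw [h2]
        push_cast
        rw [ind_pow_apply, ind_pow_apply]
    _ = ∑ y ∈ (ind A ^ (k-1)).support, (ind A ^ (k-1)) (x + y) * (ind A ^ (k-1)) y := by
        refine sum_swap_support ?_ ?_
        · intro y hy
          rw [ind_pow_apply (x := y), cnt_eq_zero_of_not_mem_image hy]
          norm_num
        · intro y hy
          rw [Finsupp.notMem_support_iff.1 hy, mul_zero]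

lemma eWeight_eq (k : ℕ) (A E F : Finset G) :
    (eWeight k A E F : ℝ)
      = (nflip (ind E * ind A ^ (k-1)) * (ind F * ind A ^ (k-1))) 0 := by
  have key : nflip (ind E * ind A ^ (k-1)) * (ind F * ind A ^ (k-1))
      = nflip (ind E * nflip (ind F)) * ((ind A ^ (k-1)) * nflip (ind A ^ (k-1))) := by
    rw [nflip_mul, nflip_mul, nflip_nflip]
    ring
  rw [key, pair0]
  have hsupp : (ind E * nflip (ind F)).support ⊆ E - F := by
    intro x hx
    by_contra hmem
    apply Finsupp.mem_support_iff.1 hx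
    rw [mul_nflip_apply, ind_support]
    refine Finset.sum_eq_zero fun y hy => ?_
    rw [ind_apply]
    have : x + y ∉ E := by
      intro hE
      exact hmem (Finset.mem_sub.2 ⟨x + y, hE, y, hy, by abel⟩)
    rw [if_neg this, zero_mul]
  rw [eWeight, Nat.cast_sum]
  calc ∑ x ∈ E - F, ((circ2 E F x * circConv k A x : ℕ) : ℝ)
      = ∑ x ∈ E - F, (ind E * nflip (ind F)) x *
          ((ind A ^ (k-1)) * nflip (ind A ^ (k-1))) x := by
        refine Finset.sum_congr rfl fun x _ => ?_
        push_cast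
        rw [circ2_eq, circConv_eq]
    _ = ∑ x ∈ (ind E * nflip (ind F)).support, (ind E * nflip (ind F)) x *
          ((ind A ^ (k-1)) * nflip (ind A ^ (k-1))) x := by
        refine sum_swap_support ?_ ?_
        · intro x hx
          rw [← circ2_eq]
          have : circ2 E F x = 0 := by
            rw [circ2, Finset.card_eq_zero, Finset.filter_eq_empty_iff]
            rintro ⟨a, b⟩ hab hsub
            simp only [Finset.mem_product] at hab
            exact hx (Finset.mem_sub.2 ⟨a, hab.1, b, hab.2, hsub⟩)
          rw [this]
          norm_num
        · intro x hx
          rw [Finsupp.notMem_support_iff.1 hx, zero_mul]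

lemma c_step (S A : Finset G) (m M : ℕ) (hm : m ≤ M) :
    (phi (ind S ^ m * ind A ^ (2*M - m)))^2
      ≤ phi (ind S ^ (2*m) * ind A ^ (2*M - 2*m)) * phi (ind A ^ (2*M)) := by
  have e1 : (ind S ^ m * ind A ^ (M-m)) * (ind A ^ M) = ind S ^ m * ind A ^ (2*M - m) := by
    rw [mul_assoc, ← pow_add]
    congr 2
    omega
  have e2 : (ind S ^ m * ind A ^ (M-m)) * (ind S ^ m * ind A ^ (M-m))
      = ind S ^ (2*m) * ind A ^ (2*M - 2*m) := by
    have h1 : 2*m = m + m := by omega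
    have h2 : 2*M - 2*m = (M-m) + (M-m) := by omega
    rw [h2, h1, pow_add, pow_add]
    ring
  have e3 : (ind A ^ M : AddMonoidAlgebra ℝ G) * (ind A ^ M) = ind A ^ (2*M) := by
    rw [← pow_add]
    congr 1
    omega
  have := csL (ind S ^ m * ind A ^ (M-m)) (ind A ^ M)
  rwa [e1, e2, e3] at this

lemma c_iter (S A : Finset G) (p : ℕ) :
    ∀ j, j ≤ p → (phi (ind S ^ 1 * ind A ^ (2^p - 1)))^(2^j)
      ≤ phi (ind S ^ (2^j) * ind A ^ (2^p - 2^j)) * (phi (ind A ^ (2^p)))^(2^j - 1) := by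
  intro j
  induction j with
  | zero => intro _; simp
  | succ j ih =>
    intro hj
    have hj' : j ≤ p := by omega
    have hstep := c_step S A (2^j) (2^(p-1))
      (by
        have : 2^j ≤ 2^(p-1) := Nat.pow_le_pow_right (by norm_num) (by omega)
        exact this)
    have hM : 2 * 2^(p-1) = 2^p := by
      rw [← pow_succ']
      congr 1
      omega
    have hm2 : 2 * 2^j = 2^(j+1) := by rw [← pow_succ']
    rw [hM, hm2] at hstep
    have h0 : (0:ℝ) ≤ phi (ind S ^ 1 * ind A ^ (2^p - 1)) := phi_nonneg _
    have hT0 : (0:ℝ) ≤ phi (ind A ^ (2^p)) := phi_nonneg _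
    calc (phi (ind S ^ 1 * ind A ^ (2^p - 1)))^(2^(j+1))
        = ((phi (ind S ^ 1 * ind A ^ (2^p - 1)))^(2^j))^2 := by
          have hexp : 2^(j+1) = 2^j * 2 := by rw [pow_succ]
          rw [hexp, pow_mul]
      _ ≤ (phi (ind S ^ (2^j) * ind A ^ (2^p - 2^j)) * (phi (ind A ^ (2^p)))^(2^j - 1))^2 :=
          pow_le_pow_left₀ (pow_nonneg h0 _) (ih hj') 2
      _ = (phi (ind S ^ (2^j) * ind A ^ (2^p - 2^j)))^2 * (phi (ind A ^ (2^p)))^(2*(2^j - 1)) := by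
          rw [mul_pow, ← pow_mul]
          ring_nf
      _ ≤ (phi (ind S ^ (2^(j+1)) * ind A ^ (2^p - 2^(j+1))) * phi (ind A ^ (2^p)))
            * (phi (ind A ^ (2^p)))^(2*(2^j - 1)) :=
          mul_le_mul_of_nonneg_right hstep (pow_nonneg hT0 _)
      _ = phi (ind S ^ (2^(j+1)) * ind A ^ (2^p - 2^(j+1))) * (phi (ind A ^ (2^p)))^(2^(j+1) - 1) := by
          rw [mul_assoc, ← pow_succ']
          congr 2
          have h1 : 1 ≤ 2^j := Nat.one_le_two_pow
          have : 2^(j+1) = 2 * 2^j := by rw [pow_succ']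
          omega

lemma Q_pow_le (S A : Finset G) (p : ℕ) :
    (phi (ind S * ind A ^ (2^p - 1)))^(2^p)
      ≤ (Tk (2^p) S : ℝ) * (Tk (2^p) A : ℝ)^(2^p - 1) := by
  have := c_iter S A p p le_rfl
  rw [Nat.sub_self, pow_zero, mul_one, pow_one] at this
  rw [Tk_eq_phi, Tk_eq_phi]
  exact this

lemma Tk_mono (k : ℕ) {S T : Finset G} (h : S ⊆ T) : Tk k S ≤ Tk k T := by
  apply Finset.card_le_card
  apply Finset.filter_subset_filter
  apply Finset.product_subset_product <;>
    exact Fintype.piFinset_subset _ _ fun _ => h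

lemma le_Tk (k : ℕ) (S : Finset G) : S.card ^ k ≤ Tk k S := by
  have hcard : (Fintype.piFinset fun _ : Fin k => S).card = S.card ^ k := by
    rw [Fintype.card_piFinset]
    simp
  rw [← hcard]
  apply Finset.card_le_card_of_injOn (fun t => (t, t))
  · intro t ht
    refine Finset.mem_filter.2 ⟨Finset.mem_product.2 ⟨ht, ht⟩, rfl⟩
  · intro a _ b _ hab
    exact congrArg Prod.fst hab

lemma arith_lemma (k n : ℕ) (TA TB TE TF QE QF e CD : ℝ)
    (hkn : 2*k = 2*n + 2)
    (hCD : 0 ≤ CD) (hTA1 : 1 ≤ TA) (hTFpos : 0 < TF) (hTFA : TF ≤ TA) (hTBA : TB ≤ TA)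
    (hTE0 : 0 ≤ TE) (he1 : CD * TA ≤ e) (hesq : e^2 ≤ QE * QF)
    (hQE : QE^k ≤ TE * TA^n) (hQF : QF^k ≤ TF * TA^n) (hQF0 : 0 ≤ QF) :
    CD^(2*k) * TB ≤ TE := by
  have hTA0 : (0:ℝ) < TA := lt_of_lt_of_le one_pos hTA1
  have h1 : (CD*TA)^(2*k) ≤ TE * TF * TA^(2*n) := by
    calc (CD*TA)^(2*k) ≤ e^(2*k) := pow_le_pow_left₀ (by positivity) he1 _
    _ = (e^2)^k := by rw [← pow_mul]
    _ ≤ (QE*QF)^k := pow_le_pow_left₀ (sq_nonneg e) hesq k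
    _ = QE^k * QF^k := mul_pow _ _ _
    _ ≤ (TE * TA^n) * (TF * TA^n) :=
        mul_le_mul hQE hQF (pow_nonneg hQF0 k) (by positivity)
    _ = TE * TF * TA^(2*n) := by
        rw [show 2*n = n + n by omega, pow_add]; ring
  have h2 : (CD*TA)^(2*k) = (CD^(2*k) * TA^2) * TA^(2*n) := by
    rw [hkn, mul_pow, show 2*n+2 = 2*n + 2 from rfl, pow_add (a := TA) (m := 2*n) (n := 2)]
    ring
  have h3 : CD^(2*k) * TA^2 ≤ TE * TF := by
    rw [h2] at h1
    exact le_of_mul_le_mul_right h1 (pow_pos hTA0 _)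
  have h4 : (CD^(2*k) * TA) * TF ≤ TE * TF := by
    calc (CD^(2*k) * TA) * TF ≤ (CD^(2*k) * TA) * TA :=
          mul_le_mul_of_nonneg_left hTFA (by positivity)
    _ = CD^(2*k) * TA^2 := by ring
    _ ≤ TE * TF := h3
  have h5 : CD^(2*k) * TA ≤ TE := le_of_mul_le_mul_right h4 hTFpos
  calc CD^(2*k) * TB ≤ CD^(2*k) * TA := mul_le_mul_of_nonneg_left hTBA (pow_nonneg hCD _)
  _ ≤ TE := h5

lemma key_lemma (p : ℕ) (hp : 1 ≤ p) (C : ℝ) (hC0 : 0 < C) (A B : Finset G) (hBA : B ⊆ A)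
    (hAne : A.Nonempty)
    (hconn : ∀ E F : Finset G, Disjoint E F → E ∪ F = B →
      C * ((E.card : ℝ) / A.card) * ((F.card : ℝ) / A.card) * (Tk (2 ^ p) A : ℝ) ≤
        (eWeight (2 ^ p) A E F : ℝ))
    (E : Finset G) (hEB : E ⊆ B) (hFne : (B \ E).Nonempty) :
    (C * (((E.card : ℝ) * (((B \ E).card) : ℝ)) / ((A.card:ℝ))^2)) ^ (2 * 2^p)
        * (Tk (2^p) B : ℝ) ≤ (Tk (2^p) E : ℝ) := by
  have hk2 : 2 ≤ 2^p := by
    calc 2 = 2^1 := (pow_one 2).symm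
    _ ≤ 2^p := Nat.pow_le_pow_right (by norm_num) hp
  have hApos : (0:ℝ) < A.card := by exact_mod_cast Finset.card_pos.2 hAne
  have hdisj : Disjoint E (B \ E) := Finset.disjoint_sdiff
  have hunion : E ∪ (B \ E) = B := Finset.union_sdiff_of_subset hEB
  have hTA1 : (1:ℝ) ≤ (Tk (2^p) A : ℝ) := by
    have h1 : 1 ≤ A.card ^ (2^p) := Nat.one_le_pow _ _ (Finset.card_pos.2 hAne)
    exact_mod_cast le_trans h1 (le_Tk (2^p) A)
  have hTFpos : (0:ℝ) < (Tk (2^p) (B \ E) : ℝ) := by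
    have h1 : 1 ≤ (B \ E).card ^ (2^p) := Nat.one_le_pow _ _ (Finset.card_pos.2 hFne)
    exact_mod_cast lt_of_lt_of_le Nat.zero_lt_one (le_trans h1 (le_Tk (2^p) (B \ E)))
  have hTFA : (Tk (2^p) (B \ E) : ℝ) ≤ (Tk (2^p) A : ℝ) := by
    exact_mod_cast Tk_mono (2^p) (le_trans (Finset.sdiff_subset) hBA)
  have hTBA : (Tk (2^p) B : ℝ) ≤ (Tk (2^p) A : ℝ) := by
    exact_mod_cast Tk_mono (2^p) hBA
  have he1 : (C * (((E.card : ℝ) * (((B \ E).card) : ℝ)) / ((A.card:ℝ))^2))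
      * (Tk (2^p) A : ℝ) ≤ (eWeight (2^p) A E (B \ E) : ℝ) := by
    have := hconn E (B \ E) hdisj hunion
    calc (C * (((E.card : ℝ) * (((B \ E).card) : ℝ)) / ((A.card:ℝ))^2)) * (Tk (2^p) A : ℝ)
        = C * ((E.card : ℝ) / A.card) * (((B \ E).card : ℝ) / A.card) * (Tk (2^p) A : ℝ) := by
          ring
    _ ≤ _ := this
  have hesq : ((eWeight (2^p) A E (B \ E) : ℝ))^2
      ≤ phi (ind E * ind A ^ (2^p - 1)) * phi (ind (B \ E) * ind A ^ (2^p - 1)) := by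
    rw [eWeight_eq]
    exact pair_sq_le _ _
  refine arith_lemma (2^p) (2^p - 1) _ _ _ _ _ _ _ _ (by omega) (by positivity) hTA1 hTFpos
    hTFA hTBA (Nat.cast_nonneg _) he1 hesq ?_ ?_ (phi_nonneg _)
  · exact Q_pow_le E A p
  · exact Q_pow_le (B \ E) A p

theorem stmt15 (p : ℕ) (hp : 1 ≤ p) (β : ℝ) (hβ0 : 0 ≤ β) (hβ1 : β ≤ 1)
    (C : ℝ) (hC0 : 0 < C) (hC1 : C ≤ 1) (A B : Finset G) (hBA : B ⊆ A)
    (hBcard : β * (A.card : ℝ) ≤ (B.card : ℝ))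
    (hconn : ∀ E F : Finset G, Disjoint E F → E ∪ F = B →
      C * ((E.card : ℝ) / A.card) * ((F.card : ℝ) / A.card) * (Tk (2 ^ p) A : ℝ) ≤
        (eWeight (2 ^ p) A E F : ℝ)) :
    ∀ B' ⊆ B,
      (C * β ^ 2 / 8) ^ (2 * 2 ^ p) * ((B'.card : ℝ) / B.card) ^ (2 * 2 ^ p) *
          (Tk (2 ^ p) B : ℝ) ≤
        (Tk (2 ^ p) B' : ℝ) := by
  intro B' hB'
  have hkpos : 0 < 2 * 2^p := by positivity
  by_cases hβ : β = 0
  · subst hβ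
    have h0 : (C * (0:ℝ)^2 / 8) = 0 := by ring
    rw [h0, zero_pow (by omega), zero_mul, zero_mul]
    exact Nat.cast_nonneg _
  have hβpos : 0 < β := lt_of_le_of_ne hβ0 (Ne.symm hβ)
  by_cases hB'0 : B' = ∅
  · subst hB'0
    rw [Finset.card_empty, Nat.cast_zero, zero_div, zero_pow (by omega), mul_zero, zero_mul]
    exact Nat.cast_nonneg _
  obtain ⟨b0, hb0⟩ := Finset.nonempty_iff_ne_empty.2 hB'0
  have hB'ne : B'.Nonempty := ⟨b0, hb0⟩
  have hBne : B.Nonempty := ⟨b0, hB' hb0⟩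
  have hAne : A.Nonempty := ⟨b0, hBA (hB' hb0)⟩
  have hBpos : (0:ℝ) < B.card := by exact_mod_cast Finset.card_pos.2 hBne
  have hApos : (0:ℝ) < A.card := by exact_mod_cast Finset.card_pos.2 hAne
  have hfrac1 : (B'.card : ℝ) / B.card ≤ 1 := by
    rw [div_le_one hBpos]
    exact_mod_cast Finset.card_le_card hB'
  have hfrac0 : 0 ≤ (B'.card : ℝ) / B.card := by positivity
  have hconst1 : C * β^2 / 8 ≤ 1 := by nlinarith [sq_nonneg β, sq_nonneg (1 - β)]
  have hconst0 : 0 ≤ C * β^2 / 8 := by positivity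
  by_cases hBB : B' = B
  · subst hBB
    have h1 : (C * β^2/8)^(2*2^p) ≤ 1 := pow_le_one₀ hconst0 hconst1
    have h2 : ((B'.card:ℝ)/B'.card)^(2*2^p) ≤ 1 := pow_le_one₀ hfrac0 hfrac1
    calc (C * β^2/8)^(2*2^p) * ((B'.card:ℝ)/B'.card)^(2*2^p) * (Tk (2^p) B' : ℝ)
        ≤ 1 * 1 * (Tk (2^p) B' : ℝ) := by
          refine mul_le_mul_of_nonneg_right ?_ (Nat.cast_nonneg _)
          exact mul_le_mul h1 h2 (by positivity) zero_le_one
    _ = (Tk (2^p) B' : ℝ) := by ring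
  have hB'lt : B'.card < B.card :=
    Finset.card_lt_card (HasSubset.Subset.ssubset_of_ne hB' hBB)
  have hB'pos : 0 < B'.card := Finset.card_pos.2 hB'ne
  by_cases hhalf : 2 * B'.card ≤ B.card
  · -- E = B'
    have hFne : (B \ B').Nonempty := by
      rw [Finset.sdiff_nonempty]
      intro h
      exact hBB (Finset.Subset.antisymm hB' h)
    have key := key_lemma p hp C hC0 A B hBA hAne hconn B' hB' hFne
    have hFcard : (B \ B').card = B.card - B'.card := Finset.card_sdiff_of_subset hB'
    have hF2 : (B.card : ℝ) ≤ 2 * ((B \ B').card : ℝ) := by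
      have : B.card ≤ 2 * (B \ B').card := by omega
      exact_mod_cast this
    have hcd : (C * β^2/8) * ((B'.card:ℝ)/B.card)
        ≤ C * ((B'.card : ℝ) * (((B \ B').card) : ℝ) / ((A.card:ℝ))^2) := by
      have inner : (β^2/8) * ((B'.card:ℝ)/B.card)
          ≤ (B'.card : ℝ) * (((B \ B').card) : ℝ) / ((A.card:ℝ))^2 := by
        rw [div_mul_div_comm, div_le_div_iff₀ (by positivity) (by positivity)]
        have hsq : β^2 * (A.card:ℝ)^2 ≤ (B.card:ℝ)^2 := by
          nlinarith [mul_nonneg hβ0 hApos.le]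
        have hx0 : (0:ℝ) ≤ (B'.card:ℝ) := Nat.cast_nonneg _
        nlinarith [mul_le_mul_of_nonneg_left hsq hx0,
          mul_le_mul_of_nonneg_left hF2 (mul_nonneg hx0 hBpos.le)]
      calc (C * β^2/8) * ((B'.card:ℝ)/B.card) = C * ((β^2/8) * ((B'.card:ℝ)/B.card)) := by ring
      _ ≤ C * ((B'.card : ℝ) * (((B \ B').card) : ℝ) / ((A.card:ℝ))^2) :=
          mul_le_mul_of_nonneg_left inner hC0.le
    calc (C * β^2/8)^(2*2^p) * ((B'.card:ℝ)/B.card)^(2*2^p) * (Tk (2^p) B : ℝ)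
        = ((C * β^2/8) * ((B'.card:ℝ)/B.card))^(2*2^p) * (Tk (2^p) B : ℝ) := by
          rw [mul_pow]
    _ ≤ (C * ((B'.card : ℝ) * (((B \ B').card) : ℝ) / ((A.card:ℝ))^2))^(2*2^p)
          * (Tk (2^p) B : ℝ) := by
          refine mul_le_mul_of_nonneg_right ?_ (Nat.cast_nonneg _)
          exact pow_le_pow_left₀ (by positivity) hcd _
    _ ≤ (Tk (2^p) B' : ℝ) := key
  · -- E ⊆ B' with card (B.card+1)/2
    push_neg at hhalf
    have hB2 : 2 ≤ B.card := by omega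
    obtain ⟨E, hEB', hEcard⟩ :=
      Finset.exists_subset_card_eq (s := B') (n := (B.card+1)/2) (by omega)
    have hEB : E ⊆ B := hEB'.trans hB'
    have hFcard : (B \ E).card = B.card - E.card := Finset.card_sdiff_of_subset hEB
    have hFne : (B \ E).Nonempty := by
      rw [← Finset.card_pos, hFcard, hEcard]
      omega
    have key := key_lemma p hp C hC0 A B hBA hAne hconn E hEB hFne
    have hTkE : (Tk (2^p) E : ℝ) ≤ (Tk (2^p) B' : ℝ) := by
      exact_mod_cast Tk_mono (2^p) hEB'
    have hE2 : (B.card : ℝ) ≤ 2 * (E.card : ℝ) := by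
      have : B.card ≤ 2 * E.card := by omega
      exact_mod_cast this
    have hF4 : (B.card : ℝ) ≤ 4 * ((B \ E).card : ℝ) := by
      have : B.card ≤ 4 * (B \ E).card := by omega
      exact_mod_cast this
    have hcd : (C * β^2/8) * ((B'.card:ℝ)/B.card)
        ≤ C * ((E.card : ℝ) * (((B \ E).card) : ℝ) / ((A.card:ℝ))^2) := by
      have inner : (β^2/8) * ((B'.card:ℝ)/B.card)
          ≤ (E.card : ℝ) * (((B \ E).card) : ℝ) / ((A.card:ℝ))^2 := by
        have step1 : (β^2/8) * ((B'.card:ℝ)/B.card) ≤ β^2/8 :=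
          mul_le_of_le_one_right (by positivity) hfrac1
        refine le_trans step1 ?_
        rw [div_le_div_iff₀ (by norm_num) (by positivity)]
        have hsq : β^2 * (A.card:ℝ)^2 ≤ (B.card:ℝ)^2 := by
          nlinarith [mul_nonneg hβ0 hApos.le]
        nlinarith [mul_le_mul hE2 hF4 hBpos.le (by positivity : (0:ℝ) ≤ 2 * (E.card:ℝ))]
      calc (C * β^2/8) * ((B'.card:ℝ)/B.card) = C * ((β^2/8) * ((B'.card:ℝ)/B.card)) := by ring
      _ ≤ _ := mul_le_mul_of_nonneg_left inner hC0.le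
    calc (C * β^2/8)^(2*2^p) * ((B'.card:ℝ)/B.card)^(2*2^p) * (Tk (2^p) B : ℝ)
        = ((C * β^2/8) * ((B'.card:ℝ)/B.card))^(2*2^p) * (Tk (2^p) B : ℝ) := by
          rw [mul_pow]
    _ ≤ (C * ((E.card : ℝ) * (((B \ E).card) : ℝ) / ((A.card:ℝ))^2))^(2*2^p)
          * (Tk (2^p) B : ℝ) := by
          refine mul_le_mul_of_nonneg_right ?_ (Nat.cast_nonneg _)
          exact pow_le_pow_left₀ (by positivity) hcd _
    _ ≤ (Tk (2^p) E : ℝ) := key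
    _ ≤ (Tk (2^p) B' : ℝ) := hTkE
end Stmt15Aux
end
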